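/- arXiv:2104.08468 — 8 statements merged into one kernel-verified Lean document; each statement's English description precedes it below -/
import Mathlib

section
/- For every real number p there exist constants c₁, c₂ > 0 and T > 1 such that for all t ≥ T one has c₁·2^{-t}/(t-1) ≤ ∫₁^∞ (1+r²)^{-t} r^p dr ≤ c₂·2^{-t}/(t-1). -/
open MeasureTheory Real

noncomputable section

def mlog {n : ℕ} (ξ : EuclideanSpace ℝ (Fin n)) : ℝ := Real.log (1 + ‖ξ‖ ^ 2)

def rho {n : ℕ} (ξ : EuclideanSpace ℝ (Fin n)) : ℝ :=
  min (min ((1/2) * mlog ξ * (1 + mlog ξ)) (1 / (2 * (1 + mlog ξ))))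
    ((1/2) * Real.sqrt (mlog ξ))

def ft {n : ℕ} (f : EuclideanSpace ℝ (Fin n) → ℂ) (ξ : EuclideanSpace ℝ (Fin n)) : ℂ :=
  ∫ x, Complex.exp (-Complex.I * ((inner ℝ x ξ : ℝ) : ℂ)) * f x

def normL1 {n : ℕ} (f : EuclideanSpace ℝ (Fin n) → ℂ) : ℝ := ∫ x, ‖f x‖

def norm11 {n : ℕ} (f : EuclideanSpace ℝ (Fin n) → ℂ) : ℝ :=
  ∫ x, (1 + ‖x‖) * ‖f x‖

def MemL11 {n : ℕ} (f : EuclideanSpace ℝ (Fin n) → ℂ) : Prop :=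
  Integrable f ∧ Integrable (fun x => (1 + ‖x‖) * ‖f x‖)

def Ysq {n : ℕ} (f : EuclideanSpace ℝ (Fin n) → ℂ) (δ : ℝ) : ℝ :=
  ∫ ξ, (1 + mlog ξ) ^ δ * ‖ft f ξ‖ ^ 2

def MemY {n : ℕ} (f : EuclideanSpace ℝ (Fin n) → ℂ) (δ : ℝ) : Prop :=
  Integrable (fun ξ => (1 + mlog ξ) ^ δ * ‖ft f ξ‖ ^ 2)

def IsFourierSol {n : ℕ} (u₀ u₁ : EuclideanSpace ℝ (Fin n) → ℂ)
    (v : ℝ → EuclideanSpace ℝ (Fin n) → ℂ) : Prop :=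
  Measurable (Function.uncurry v) ∧
  ∀ ξ, ContDiff ℝ 2 (fun t => v t ξ) ∧
    (∀ t > (0:ℝ), ((1 + mlog ξ : ℝ) : ℂ) * deriv (deriv (fun s => v s ξ)) t
        + ((mlog ξ * (1 + mlog ξ) : ℝ) : ℂ) * v t ξ + deriv (fun s => v s ξ) t = 0) ∧
    v 0 ξ = ft u₀ ξ ∧ deriv (fun s => v s ξ) 0 = ft u₁ ξ

def PP {n : ℕ} (u₀ u₁ : EuclideanSpace ℝ (Fin n) → ℂ) : ℂ := (∫ x, u₀ x) + ∫ x, u₁ x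

def prof1 {n : ℕ} (u₀ u₁ : EuclideanSpace ℝ (Fin n) → ℂ) (t : ℝ)
    (ξ : EuclideanSpace ℝ (Fin n)) : ℂ :=
  PP u₀ u₁ * ((Real.exp (-(t * (mlog ξ * (1 + mlog ξ)))) : ℝ) : ℂ)

def prof2 {n : ℕ} (u₀ u₁ : EuclideanSpace ℝ (Fin n) → ℂ) (t : ℝ)
    (ξ : EuclideanSpace ℝ (Fin n)) : ℂ :=
  ((Real.exp (-(t / (2 * mlog ξ))) : ℝ) : ℂ) *
    (((Real.sin (Real.sqrt (mlog ξ) * t) / Real.sqrt (mlog ξ) : ℝ) : ℂ) * ft u₁ ξ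
      + ((Real.cos (Real.sqrt (mlog ξ) * t) : ℝ) : ℂ) * ft u₀ ξ)

def I0 {n : ℕ} (u₀ u₁ : EuclideanSpace ℝ (Fin n) → ℂ) (l : ℝ) : ℝ :=
  Real.sqrt (norm11 u₀ ^ 2 + norm11 u₁ ^ 2 + Ysq u₀ (l + 1) + Ysq u₁ l)

theorem integral_Ioi_rpow_asymptotics (p : ℝ) :
    ∃ c₁ c₂ T : ℝ, 0 < c₁ ∧ 0 < c₂ ∧ 1 < T ∧ ∀ t ≥ T,
      c₁ * ((2:ℝ) ^ (-t) / (t - 1)) ≤ (∫ r in Set.Ioi (1:ℝ), (1 + r ^ 2) ^ (-t) * r ^ p) ∧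
      (∫ r in Set.Ioi (1:ℝ), (1 + r ^ 2) ^ (-t) * r ^ p) ≤ c₂ * ((2:ℝ) ^ (-t) / (t - 1)) := by
  refine ⟨1/3, 2, max 2 (max (3 - p) (2 * p + 3)), by norm_num, by norm_num, by
    simp only [lt_max_iff]; left; norm_num, ?_⟩
  intro t ht
  have ht2 : (2:ℝ) ≤ t := le_trans (le_max_left _ _) ht
  have ht3 : 3 - p ≤ t := le_trans (le_trans (le_max_left _ _) (le_max_right _ _)) ht
  have ht4 : 2 * p + 3 ≤ t := le_trans (le_trans (le_max_right _ _) (le_max_right _ _)) ht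
  have hpt : p - t < -1 := by linarith
  have hpt2 : p - 2 * t < -1 := by linarith
  have hA' : (0:ℝ) < 2 ^ (-t) := Real.rpow_pos_of_pos (by norm_num) _
  -- integrability of bounding functions
  have hgU : MeasureTheory.IntegrableOn (fun r : ℝ => 2 ^ (-t) * r ^ (p - t)) (Set.Ioi 1) :=
    (integrableOn_Ioi_rpow_of_lt hpt one_pos).const_mul _
  have hgL : MeasureTheory.IntegrableOn (fun r : ℝ => 2 ^ (-t) * r ^ (p - 2 * t)) (Set.Ioi 1) :=
    (integrableOn_Ioi_rpow_of_lt hpt2 one_pos).const_mul _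
  -- pointwise bounds
  have hub : ∀ r ∈ Set.Ioi (1:ℝ), (1 + r ^ 2) ^ (-t) * r ^ p ≤ 2 ^ (-t) * r ^ (p - t) := by
    intro r hr
    have hr1 : (1:ℝ) < r := hr
    have hr0 : (0:ℝ) < r := by linarith
    have h1 : (1 + r ^ 2) ^ (-t) ≤ (2 * r) ^ (-t) := by
      apply Real.rpow_le_rpow_of_nonpos (by linarith) (by nlinarith) (by linarith)
    calc (1 + r ^ 2) ^ (-t) * r ^ p ≤ (2 * r) ^ (-t) * r ^ p := by
          apply mul_le_mul_of_nonneg_right h1 (Real.rpow_nonneg hr0.le _)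
      _ = 2 ^ (-t) * r ^ (p - t) := by
          rw [Real.mul_rpow (by norm_num) hr0.le, mul_assoc, ← Real.rpow_add hr0]
          ring_nf
  have hlb : ∀ r ∈ Set.Ioi (1:ℝ), 2 ^ (-t) * r ^ (p - 2 * t) ≤ (1 + r ^ 2) ^ (-t) * r ^ p := by
    intro r hr
    have hr1 : (1:ℝ) < r := hr
    have hr0 : (0:ℝ) < r := by linarith
    have h1 : (2 * r ^ 2) ^ (-t) ≤ (1 + r ^ 2) ^ (-t) := by
      apply Real.rpow_le_rpow_of_nonpos (by positivity) (by nlinarith) (by linarith)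
    calc 2 ^ (-t) * r ^ (p - 2 * t) = (2 * r ^ 2) ^ (-t) * r ^ p := by
          rw [Real.mul_rpow (by norm_num) (by positivity), ← Real.rpow_natCast r 2,
            ← Real.rpow_mul hr0.le, mul_assoc, ← Real.rpow_add hr0]
          push_cast
          ring_nf
      _ ≤ (1 + r ^ 2) ^ (-t) * r ^ p := by
          apply mul_le_mul_of_nonneg_right h1 (Real.rpow_nonneg hr0.le _)
  -- integrability of the middle function
  have hmeas : MeasureTheory.AEStronglyMeasurable
      (fun r : ℝ => (1 + r ^ 2) ^ (-t) * r ^ p)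
      (MeasureTheory.volume.restrict (Set.Ioi 1)) := by
    have hc : ContinuousOn (fun r : ℝ => (1 + r ^ 2) ^ (-t) * r ^ p) (Set.Ioi 1) := by
      apply ContinuousOn.mul
      · exact (continuous_const.add (continuous_pow 2)).continuousOn.rpow_const
          fun x _ => Or.inl (by simp only [Pi.add_apply]; positivity)
      · exact continuousOn_id.rpow_const
          fun x hx => Or.inl (ne_of_gt (lt_trans one_pos hx))
    exact hc.aestronglyMeasurable measurableSet_Ioi
  have hint : MeasureTheory.IntegrableOn (fun r : ℝ => (1 + r ^ 2) ^ (-t) * r ^ p)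
      (Set.Ioi 1) := by
    apply MeasureTheory.Integrable.mono' hgU hmeas
    filter_upwards [MeasureTheory.ae_restrict_mem measurableSet_Ioi] with r hr
    have hr0 : (0:ℝ) < r := lt_trans one_pos hr
    rw [Real.norm_eq_abs, abs_of_nonneg (by positivity)]
    exact hub r hr
  -- integral values
  have hIU : ∫ r in Set.Ioi (1:ℝ), 2 ^ (-t) * r ^ (p - t) = 2 ^ (-t) * (1 / (t - p - 1)) := by
    rw [MeasureTheory.integral_const_mul, integral_Ioi_rpow_of_lt hpt one_pos, Real.one_rpow]
    have h1 : p - t + 1 ≠ 0 := by intro h; linarith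
    have h2 : t - p - 1 ≠ 0 := by intro h; linarith
    field_simp
    ring
  have hIL : ∫ r in Set.Ioi (1:ℝ), 2 ^ (-t) * r ^ (p - 2 * t)
      = 2 ^ (-t) * (1 / (2 * t - p - 1)) := by
    rw [MeasureTheory.integral_const_mul, integral_Ioi_rpow_of_lt hpt2 one_pos, Real.one_rpow]
    have h1 : p - 2 * t + 1 ≠ 0 := by intro h; linarith
    have h2 : 2 * t - p - 1 ≠ 0 := by intro h; linarith
    field_simp
    rw [show p - t * 2 + 1 = -(t * 2 - p - 1) by ring, one_div_neg_eq_neg_one_div, neg_neg]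
  refine ⟨?_, ?_⟩
  · have key : (1/3 : ℝ) * (2 ^ (-t) / (t - 1)) ≤ 2 ^ (-t) * (1 / (2 * t - p - 1)) := by
        have e1 : (1/3:ℝ) * (2 ^ (-t) / (t - 1)) = 2 ^ (-t) / ((t - 1) * 3) := by
          rw [mul_comm, mul_one_div, div_div]
        have e2 : (2:ℝ) ^ (-t) * (1 / (2 * t - p - 1)) = 2 ^ (-t) / (2 * t - p - 1) := by
          rw [mul_one_div]
        rw [e1, e2]
        have h1 : (0:ℝ) < 2 * t - p - 1 := by linarith
        have h2 : 2 * t - p - 1 ≤ (t - 1) * 3 := by linarith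
        gcongr
    calc (1/3 : ℝ) * (2 ^ (-t) / (t - 1)) ≤ 2 ^ (-t) * (1 / (2 * t - p - 1)) := key
      _ = ∫ r in Set.Ioi (1:ℝ), 2 ^ (-t) * r ^ (p - 2 * t) := hIL.symm
      _ ≤ ∫ r in Set.Ioi (1:ℝ), (1 + r ^ 2) ^ (-t) * r ^ p :=
        MeasureTheory.setIntegral_mono_on hgL hint measurableSet_Ioi hlb
  · calc (∫ r in Set.Ioi (1:ℝ), (1 + r ^ 2) ^ (-t) * r ^ p)
        ≤ ∫ r in Set.Ioi (1:ℝ), 2 ^ (-t) * r ^ (p - t) :=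
        MeasureTheory.setIntegral_mono_on hint hgU measurableSet_Ioi hub
      _ = 2 ^ (-t) * (1 / (t - p - 1)) := hIU
      _ ≤ 2 * (2 ^ (-t) / (t - 1)) := by
        have e1 : (2:ℝ) ^ (-t) * (1 / (t - p - 1)) = 2 ^ (-t) / (t - p - 1) := by
          rw [mul_one_div]
        have e2 : (2:ℝ) * (2 ^ (-t) / (t - 1)) = 2 ^ (-t) / ((t - 1) / 2) := by
          rw [div_div_eq_mul_div, mul_comm, div_mul_eq_mul_div]
        rw [e1, e2]
        have h1 : (0:ℝ) < (t - 1) / 2 := by linarith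
        have h2 : (t - 1) / 2 ≤ t - p - 1 := by linarith
        gcongr
end
end

section
/- Let n ≥ 1, ξ ∈ ℝⁿ, and let a, b ∈ ℂ. Set E₀ := (1+m(ξ))|b|²/2 + m(ξ)(1+m(ξ))|a|²/2 and E := E₀ + ρ(ξ)(1+m(ξ))·Re(b·conj(a)) + (ρ(ξ)/2)|a|². Then (1/2)·E₀ ≤ E ≤ 3·E₀. -/
open MeasureTheory Real

noncomputable section

theorem energy_equivalence (n : ℕ) (hn : 1 ≤ n) (ξ : EuclideanSpace ℝ (Fin n)) (a b : ℂ) :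
    (1/2) * ((1 + mlog ξ) * ‖b‖ ^ 2 / 2
        + mlog ξ * (1 + mlog ξ) * ‖a‖ ^ 2 / 2) ≤
      ((1 + mlog ξ) * ‖b‖ ^ 2 / 2
        + mlog ξ * (1 + mlog ξ) * ‖a‖ ^ 2 / 2)
        + rho ξ * (1 + mlog ξ) * (b * (starRingEnd ℂ) a).re
        + (rho ξ / 2) * ‖a‖ ^ 2 ∧
    ((1 + mlog ξ) * ‖b‖ ^ 2 / 2
        + mlog ξ * (1 + mlog ξ) * ‖a‖ ^ 2 / 2)
        + rho ξ * (1 + mlog ξ) * (b * (starRingEnd ℂ) a).re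
        + (rho ξ / 2) * ‖a‖ ^ 2 ≤
      3 * ((1 + mlog ξ) * ‖b‖ ^ 2 / 2
        + mlog ξ * (1 + mlog ξ) * ‖a‖ ^ 2 / 2) := by
  have hm : 0 ≤ mlog ξ := Real.log_nonneg (by nlinarith [sq_nonneg ‖ξ‖])
  set m := mlog ξ with hmdef
  set A := ‖a‖ with hA
  set B := ‖b‖ with hB
  have hA0 : 0 ≤ A := norm_nonneg a
  have hB0 : 0 ≤ B := norm_nonneg b
  set sm := Real.sqrt m with hsdef
  have hs : sm ^ 2 = m := Real.sq_sqrt hm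
  have hsnn : 0 ≤ sm := Real.sqrt_nonneg m
  have hrho1 : rho ξ ≤ (1/2) * sm := min_le_right _ _
  have hrho2 : rho ξ ≤ (1/2) * m * (1 + m) :=
    le_trans (min_le_left _ _) (min_le_left _ _)
  have hrho0 : 0 ≤ rho ξ := by
    apply le_min (le_min _ _) _ <;> positivity
  have habs : ‖b * (starRingEnd ℂ) a‖ = B * A := by
    rw [norm_mul, Complex.norm_conj]
  have hr1 : (b * (starRingEnd ℂ) a).re ≤ B * A := by
    rw [← habs]; exact Complex.re_le_norm _
  have hr2 : -(B * A) ≤ (b * (starRingEnd ℂ) a).re := by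
    rw [← habs]
    have := Complex.abs_re_le_norm (b * (starRingEnd ℂ) a)
    cases abs_le.mp this with
    | intro h1 h2 => linarith
  set r := (b * (starRingEnd ℂ) a).re
  set ρ := rho ξ
  have hkey : ρ * (1 + m) * (B * A) ≤
      ((1 + m) * B ^ 2 / 2 + m * (1 + m) * A ^ 2 / 2) / 2 := by
    have h1 : ρ * (1 + m) * (B * A) ≤ (1/2 * sm) * ((1 + m) * (B * A)) := by
      have hnn : 0 ≤ (1 + m) * (B * A) := by positivity
      calc ρ * (1 + m) * (B * A) = ρ * ((1 + m) * (B * A)) := by ring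
        _ ≤ _ := mul_le_mul_of_nonneg_right hrho1 hnn
    have h2 : (1/2 * sm) * ((1 + m) * (B * A)) ≤
        ((1 + m) * B ^ 2 / 2 + m * (1 + m) * A ^ 2 / 2) / 2 := by
      rw [← hs]
      nlinarith [mul_nonneg (by positivity : (0:ℝ) ≤ 1 + sm ^ 2)
        (sq_nonneg (sm * A - B))]
    linarith
  have hext : ρ / 2 * A ^ 2 ≤ ((1 + m) * B ^ 2 / 2 + m * (1 + m) * A ^ 2 / 2) / 2 := by
    have : ρ / 2 * A ^ 2 ≤ ((1/2) * m * (1 + m)) / 2 * A ^ 2 := by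
      apply mul_le_mul_of_nonneg_right (by linarith) (sq_nonneg A)
    nlinarith [sq_nonneg B, mul_nonneg hm (by linarith : (0:ℝ) ≤ 1 + m), sq_nonneg A]
  have hcub : ρ * (1 + m) * r ≤ ρ * (1 + m) * (B * A) :=
    mul_le_mul_of_nonneg_left hr1 (mul_nonneg hrho0 (by linarith))
  have hclb : -(ρ * (1 + m) * (B * A)) ≤ ρ * (1 + m) * r := by
    have := mul_le_mul_of_nonneg_left hr2 (mul_nonneg hrho0 (by linarith : (0:ℝ) ≤ 1 + m))
    calc -(ρ * (1 + m) * (B * A)) = ρ * (1 + m) * (-(B * A)) := by ring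
      _ ≤ _ := this
  have hext0 : 0 ≤ ρ / 2 * A ^ 2 := by positivity
  constructor
  · linarith
  · linarith
end
end

section
/- Let n ≥ 1, ξ ∈ ℝⁿ, and let w : [0,∞) → ℂ be twice continuously differentiable and satisfy (1+m(ξ))·w''(t) + m(ξ)(1+m(ξ))·w(t) + w'(t) = 0 for all t > 0. Define E₀(t) := (1+m(ξ))|w'(t)|²/2 + m(ξ)(1+m(ξ))|w(t)|²/2 and E(t) := E₀(t) + ρ(ξ)(1+m(ξ))·Re(w'(t)·conj(w(t))) + (ρ(ξ)/2)|w(t)|². Then E'(t) + (ρ(ξ)/2)·E(t) ≤ 0 for all t > 0. -/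
open MeasureTheory Real

noncomputable section

set_option maxHeartbeats 2000000 in
theorem energy_differential_inequality (n : ℕ) (hn : 1 ≤ n) (ξ : EuclideanSpace ℝ (Fin n))
    (w : ℝ → ℂ) (hw : ContDiff ℝ 2 w)
    (hode : ∀ t > (0:ℝ), ((1 + mlog ξ : ℝ) : ℂ) * deriv (deriv w) t
        + ((mlog ξ * (1 + mlog ξ) : ℝ) : ℂ) * w t + deriv w t = 0) :
    ∀ t > (0:ℝ),
      deriv (fun s => (1 + mlog ξ) * ‖deriv w s‖ ^ 2 / 2
          + mlog ξ * (1 + mlog ξ) * ‖w s‖ ^ 2 / 2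
          + rho ξ * (1 + mlog ξ) * (deriv w s * (starRingEnd ℂ) (w s)).re
          + (rho ξ / 2) * ‖w s‖ ^ 2) t
        + (rho ξ / 2) * ((1 + mlog ξ) * ‖deriv w t‖ ^ 2 / 2
          + mlog ξ * (1 + mlog ξ) * ‖w t‖ ^ 2 / 2
          + rho ξ * (1 + mlog ξ) * (deriv w t * (starRingEnd ℂ) (w t)).re
          + (rho ξ / 2) * ‖w t‖ ^ 2) ≤ 0 := by
  have hmnn : 0 ≤ mlog ξ := Real.log_nonneg (by nlinarith [sq_nonneg ‖ξ‖])
  have hrX : rho ξ ≤ 1/2 * mlog ξ * (1 + mlog ξ) := (min_le_left _ _).trans (min_le_left _ _)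
  have hrY : rho ξ ≤ 1 / (2 * (1 + mlog ξ)) := (min_le_left _ _).trans (min_le_right _ _)
  have hrZ : rho ξ ≤ 1/2 * Real.sqrt (mlog ξ) := min_le_right _ _
  have h1m : (0:ℝ) < 1 + mlog ξ := by linarith
  have hr0 : 0 ≤ rho ξ :=
    le_min (le_min (by positivity) (by positivity)) (by positivity)
  intro t ht
  set m := mlog ξ with hmdef
  set r := rho ξ with hrdef
  -- key numeric facts
  have hrP : r * (1 + m) ≤ 1/2 := by
    have h := mul_le_mul_of_nonneg_right hrY h1m.le
    have h2 : 1 / (2 * (1 + m)) * (1 + m) = 1/2 := by field_simp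
    linarith [h2 ▸ h]
  have hr2 : r^2 ≤ m/4 := by
    nlinarith [Real.sq_sqrt hmnn, Real.sqrt_nonneg m, mul_self_le_mul_self hr0 hrZ]
  -- differentiability
  have hdw : Differentiable ℝ w := hw.differentiable (by norm_num)
  have hw1 : ContDiff ℝ 1 (deriv w) := by
    have h2 : (2 : WithTop ℕ∞) = 1 + 1 := by norm_num
    exact ((contDiff_succ_iff_deriv).mp (h2 ▸ hw)).2.2
  have hdw' : Differentiable ℝ (deriv w) := hw1.differentiable one_ne_zero
  set A := w t with hA'
  set B := deriv w t with hB'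
  set C := deriv (deriv w) t with hC'
  have hA : HasDerivAt w B t := (hdw t).hasDerivAt
  have hB : HasDerivAt (deriv w) C t := (hdw' t).hasDerivAt
  -- the complex energy function
  set c1 : ℂ := (((1+m)/2 : ℝ) : ℂ) with hc1
  set c2 : ℂ := ((m*(1+m)/2 : ℝ) : ℂ) with hc2
  set c3 : ℂ := ((r*(1+m) : ℝ) : ℂ) with hc3
  set c4 : ℂ := ((r/2 : ℝ) : ℂ) with hc4
  have hG : HasDerivAt
      (fun s => c1 * (deriv w s * (starRingEnd ℂ) (deriv w s))
        + c2 * (w s * (starRingEnd ℂ) (w s))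
        + c3 * (deriv w s * (starRingEnd ℂ) (w s))
        + c4 * (w s * (starRingEnd ℂ) (w s)))
      (c1 * (C * (starRingEnd ℂ) B + B * (starRingEnd ℂ) C)
        + c2 * (B * (starRingEnd ℂ) A + A * (starRingEnd ℂ) B)
        + c3 * (C * (starRingEnd ℂ) A + B * (starRingEnd ℂ) B)
        + c4 * (B * (starRingEnd ℂ) A + A * (starRingEnd ℂ) B)) t := by
    exact ((((hB.mul hB.star).const_mul c1).add ((hA.mul hA.star).const_mul c2)).add
      ((hB.mul hA.star).const_mul c3)).add ((hA.mul hA.star).const_mul c4)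
  have hE : HasDerivAt
      (fun s => (c1 * (deriv w s * (starRingEnd ℂ) (deriv w s))
        + c2 * (w s * (starRingEnd ℂ) (w s))
        + c3 * (deriv w s * (starRingEnd ℂ) (w s))
        + c4 * (w s * (starRingEnd ℂ) (w s))).re)
      (c1 * (C * (starRingEnd ℂ) B + B * (starRingEnd ℂ) C)
        + c2 * (B * (starRingEnd ℂ) A + A * (starRingEnd ℂ) B)
        + c3 * (C * (starRingEnd ℂ) A + B * (starRingEnd ℂ) B)
        + c4 * (B * (starRingEnd ℂ) A + A * (starRingEnd ℂ) B)).re t :=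
    Complex.reCLM.hasFDerivAt.comp_hasDerivAt t hG
  have hEfun : (fun s => (1 + m) * ‖deriv w s‖ ^ 2 / 2
          + m * (1 + m) * ‖w s‖ ^ 2 / 2
          + r * (1 + m) * (deriv w s * (starRingEnd ℂ) (w s)).re
          + (r / 2) * ‖w s‖ ^ 2)
      = (fun s => (c1 * (deriv w s * (starRingEnd ℂ) (deriv w s))
        + c2 * (w s * (starRingEnd ℂ) (w s))
        + c3 * (deriv w s * (starRingEnd ℂ) (w s))
        + c4 * (w s * (starRingEnd ℂ) (w s))).re) := by
    funext s
    simp only [hc1, hc2, hc3, hc4, Complex.add_re, Complex.re_ofReal_mul,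
      Complex.mul_conj, Complex.ofReal_re, Complex.sq_norm]
    ring
  rw [hEfun, hE.deriv]
  -- use the ODE to compute the derivative value
  have hC0 : ((1+m : ℝ) : ℂ) * C = -(((m*(1+m) : ℝ) : ℂ) * A + B) := by
    linear_combination hode t ht
  have hCs : ((1+m : ℝ) : ℂ) * (starRingEnd ℂ) C
      = -(((m*(1+m) : ℝ) : ℂ) * (starRingEnd ℂ) A + (starRingEnd ℂ) B) := by
    have h := congrArg (starRingEnd ℂ) hC0
    simpa [map_mul, map_add, map_neg, Complex.conj_ofReal] using h
  have hGval : c1 * (C * (starRingEnd ℂ) B + B * (starRingEnd ℂ) C)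
        + c2 * (B * (starRingEnd ℂ) A + A * (starRingEnd ℂ) B)
        + c3 * (C * (starRingEnd ℂ) A + B * (starRingEnd ℂ) B)
        + c4 * (B * (starRingEnd ℂ) A + A * (starRingEnd ℂ) B)
      = ((r*(1+m) - 1 : ℝ) : ℂ) * (B * (starRingEnd ℂ) B)
        - ((r*(m*(1+m)) : ℝ) : ℂ) * (A * (starRingEnd ℂ) A)
        + ((r/2 : ℝ) : ℂ) * (A * (starRingEnd ℂ) B)
        - ((r/2 : ℝ) : ℂ) * (B * (starRingEnd ℂ) A) := by
    rw [hc1, hc2, hc3, hc4]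
    linear_combination (norm := (push_cast; ring1))
      (((1:ℝ)/2 : ℂ) * (starRingEnd ℂ) B + ((r:ℝ) : ℂ) * (starRingEnd ℂ) A) * hC0
        + (((1:ℝ)/2 : ℂ) * B) * hCs
  rw [hGval]
  set x := ‖B‖ with hx'
  set y := ‖A‖ with hy'
  set c := (B * (starRingEnd ℂ) A).re with hcdef
  have hsym : (A * (starRingEnd ℂ) B).re = c := by
    have h : A * (starRingEnd ℂ) B = (starRingEnd ℂ) (B * (starRingEnd ℂ) A) := by
      rw [map_mul, Complex.conj_conj]; ring
    rw [h, Complex.conj_re]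
  have hre : (((r*(1+m) - 1 : ℝ) : ℂ) * (B * (starRingEnd ℂ) B)
        - ((r*(m*(1+m)) : ℝ) : ℂ) * (A * (starRingEnd ℂ) A)
        + ((r/2 : ℝ) : ℂ) * (A * (starRingEnd ℂ) B)
        - ((r/2 : ℝ) : ℂ) * (B * (starRingEnd ℂ) A)).re
      = (r*(1+m) - 1) * x^2 - r*(m*(1+m)) * y^2 := by
    simp only [Complex.add_re, Complex.sub_re, Complex.re_ofReal_mul,
      Complex.mul_conj, Complex.ofReal_re, Complex.sq_norm, hsym, hcdef, hx', hy']
    ring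
  rw [hre]
  -- bound on the cross term
  have hcle : c ≤ x * y := by
    calc c ≤ ‖B * (starRingEnd ℂ) A‖ := Complex.re_le_norm _
      _ = x * y := by rw [norm_mul, Complex.norm_conj]
  have hx0 : 0 ≤ x := norm_nonneg _
  have hy0 : 0 ≤ y := norm_nonneg _
  -- final real inequality
  have key2 : r * r ≤ r * (m * (1 + m)) / 2 := by nlinarith [mul_le_mul_of_nonneg_left hrX hr0]
  have key3 : r^2 * (r * (1 + m))^2 ≤ r * (m * (1 + m)) / 8 := by
    have hP0 : 0 ≤ r * (1 + m) := mul_nonneg hr0 h1m.le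
    calc r^2 * (r * (1 + m))^2 ≤ (m/4) * (r * (1 + m))^2 :=
          mul_le_mul_of_nonneg_right hr2 (sq_nonneg _)
      _ = (m/4) * (r * (1 + m)) * (r * (1 + m)) := by ring
      _ ≤ (m/4) * (r * (1 + m)) * (1/2) :=
          mul_le_mul_of_nonneg_left hrP (by positivity)
      _ ≤ r * (m * (1 + m)) / 8 := by nlinarith
  have p1 : 0 ≤ (1/2 - r * (1 + m)) * x^2 := mul_nonneg (by linarith) (sq_nonneg x)
  have p2 : 0 ≤ (r * (m * (1 + m)) / 2 - r * r) * y^2 := mul_nonneg (by linarith) (sq_nonneg y)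
  have p3 : 0 ≤ (r * (m * (1 + m)) / 8 - r^2 * (r * (1 + m))^2) * y^2 :=
    mul_nonneg (by linarith) (sq_nonneg y)
  have p4 : 0 ≤ (r * (m * (1 + m))) * y^2 :=
    mul_nonneg (mul_nonneg hr0 (mul_nonneg hmnn h1m.le)) (sq_nonneg y)
  have p5 : 0 ≤ (3 * x - 2 * r^2 * (1 + m) * y)^2 := sq_nonneg _
  have p6 : (r^2 * (1 + m) / 2) * c ≤ (r^2 * (1 + m) / 2) * (x * y) :=
    mul_le_mul_of_nonneg_left hcle (by positivity)
  nlinarith [p1, p2, p3, p4, p5, p6]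
end
end

section
/- Let n ≥ 1, ξ ∈ ℝⁿ, and let w : [0,∞) → ℂ be twice continuously differentiable and satisfy (1+m(ξ))·w''(t) + m(ξ)(1+m(ξ))·w(t) + w'(t) = 0 for all t > 0. Then for all t > 0: (1+m(ξ))|w'(t)|² + m(ξ)(1+m(ξ))|w(t)|² ≤ 6·e^{-ρ(ξ)t/2}·[(1+m(ξ))|w'(0)|² + m(ξ)(1+m(ξ))|w(0)|²]; moreover if ξ ≠ 0 then |w(t)|² ≤ 6·e^{-ρ(ξ)t/2}·(|w'(0)|²/m(ξ) + |w(0)|²) for all t > 0. -/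
open MeasureTheory Real

set_option maxHeartbeats 1000000

noncomputable section

lemma aux_decay (m ρ : ℝ) (hm : 0 ≤ m) (hρ0 : 0 ≤ ρ)
    (h1 : 2*ρ*(1+m) ≤ 1) (h2 : 2*ρ ≤ m*(1+m)) (h3 : 4*ρ^2 ≤ m)
    (P Q : ℝ → ℝ) (hP : ContDiff ℝ 2 P) (hQ : ContDiff ℝ 2 Q)
    (hodeP : ∀ t > (0:ℝ), (1+m) * deriv (deriv P) t + m*(1+m)* P t + deriv P t = 0)
    (hodeQ : ∀ t > (0:ℝ), (1+m) * deriv (deriv Q) t + m*(1+m)* Q t + deriv Q t = 0)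
    (t : ℝ) (ht : 0 < t) :
    (1+m) * ((deriv P t)^2 + (deriv Q t)^2) + m*(1+m)*((P t)^2+(Q t)^2)
      ≤ 6 * Real.exp (-(ρ * t / 2)) *
        ((1+m)*((deriv P 0)^2 + (deriv Q 0)^2) + m*(1+m)*((P 0)^2+(Q 0)^2)) := by
  have hPd : Differentiable ℝ P := hP.differentiable (by norm_num)
  have hQd : Differentiable ℝ Q := hQ.differentiable (by norm_num)
  have hPd2 : Differentiable ℝ (deriv P) :=
    ((contDiff_succ_iff_deriv.mp (show ContDiff ℝ ((1:ℕ)+1) P from hP)).2.2).differentiable (by norm_num)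
  have hQd2 : Differentiable ℝ (deriv Q) :=
    ((contDiff_succ_iff_deriv.mp (show ContDiff ℝ ((1:ℕ)+1) Q from hQ)).2.2).differentiable (by norm_num)
  -- energy and Lyapunov function
  set E : ℝ → ℝ := fun s => (1+m) * ((deriv P s)^2 + (deriv Q s)^2)
      + m*(1+m)*((P s)^2+(Q s)^2) with hE
  set L : ℝ → ℝ := fun s => E s + 2*ρ*(1+m)*(P s * deriv P s + Q s * deriv Q s) with hL
  set D : ℝ → ℝ := fun s =>
      (1+m) * ((deriv (deriv P) s * deriv P s + deriv P s * deriv (deriv P) s)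
        + (deriv (deriv Q) s * deriv Q s + deriv Q s * deriv (deriv Q) s))
      + m*(1+m)*((deriv P s * P s + P s * deriv P s) + (deriv Q s * Q s + Q s * deriv Q s))
      + 2*ρ*(1+m)*((deriv P s * deriv P s + P s * deriv (deriv P) s)
        + (deriv Q s * deriv Q s + Q s * deriv (deriv Q) s)) with hD
  have hLD : ∀ s : ℝ, HasDerivAt L (D s) s := by
    intro s
    have p1 : HasDerivAt P (deriv P s) s := (hPd s).hasDerivAt
    have q1 : HasDerivAt Q (deriv Q s) s := (hQd s).hasDerivAt
    have p2 : HasDerivAt (deriv P) (deriv (deriv P) s) s := (hPd2 s).hasDerivAt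
    have q2 : HasDerivAt (deriv Q) (deriv (deriv Q) s) s := (hQd2 s).hasDerivAt
    have tE : HasDerivAt E
        ((1+m) * ((deriv (deriv P) s * deriv P s + deriv P s * deriv (deriv P) s)
          + (deriv (deriv Q) s * deriv Q s + deriv Q s * deriv (deriv Q) s))
        + m*(1+m)*((deriv P s * P s + P s * deriv P s)
          + (deriv Q s * Q s + Q s * deriv Q s))) s := by
      have e1 : HasDerivAt (fun s => (deriv P s)^2 + (deriv Q s)^2)
          ((deriv (deriv P) s * deriv P s + deriv P s * deriv (deriv P) s)
            + (deriv (deriv Q) s * deriv Q s + deriv Q s * deriv (deriv Q) s)) s := by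
        have := ((p2.mul p2).add (q2.mul q2))
        simpa [pow_two, Pi.mul_def, Pi.add_def] using this
      have e2 : HasDerivAt (fun s => (P s)^2 + (Q s)^2)
          ((deriv P s * P s + P s * deriv P s) + (deriv Q s * Q s + Q s * deriv Q s)) s := by
        have := ((p1.mul p1).add (q1.mul q1))
        simpa [pow_two, Pi.mul_def, Pi.add_def] using this
      simpa [hE, Pi.add_def] using (e1.const_mul (1+m)).add (e2.const_mul (m*(1+m)))
    have tC : HasDerivAt (fun s => P s * deriv P s + Q s * deriv Q s)
        ((deriv P s * deriv P s + P s * deriv (deriv P) s)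
          + (deriv Q s * deriv Q s + Q s * deriv (deriv Q) s)) s :=
      (p1.mul p2).add (q1.mul q2)
    have := tE.add (tC.const_mul (2*ρ*(1+m)))
    simpa [hL, hD, add_assoc, Pi.add_def] using this
  set G : ℝ → ℝ := fun s => Real.exp (ρ*s/2) * L s with hG
  have hGD : ∀ s : ℝ, HasDerivAt G
      (ρ/2 * Real.exp (ρ*s/2) * L s + Real.exp (ρ*s/2) * D s) s := by
    intro s
    have hexp : HasDerivAt (fun s => Real.exp (ρ*s/2)) (Real.exp (ρ*s/2) * (ρ/2)) s := by
      have hl : HasDerivAt (fun s : ℝ => ρ*s/2) (ρ/2) s := by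
        simpa using ((hasDerivAt_id s).const_mul ρ).div_const 2
      exact hl.exp
    have := hexp.mul (hLD s)
    exact this.congr_deriv (by ring)
  -- derivative of G is nonpositive on (0, ∞)
  have hGanti : AntitoneOn G (Set.Ici (0:ℝ)) := by
    apply antitoneOn_of_deriv_nonpos (convex_Ici 0)
    · exact fun s _ => ((hGD s).continuousAt).continuousWithinAt
    · intro s hs
      exact ((hGD s).differentiableAt).differentiableWithinAt
    · intro s hs
      rw [interior_Ici] at hs
      rw [(hGD s).deriv]
      have key : ρ/2 * L s + D s ≤ 0 := by
        have e1 := hodeP s hs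
        have e2 := hodeQ s hs
        set x := deriv P s; set y := deriv Q s
        set xx := deriv (deriv P) s; set yy := deriv (deriv Q) s
        set p := P s; set q := Q s
        have hquad : ρ/2 * L s + D s =
            ((-2 + (5/2)*ρ*(1+m))*x^2 - (3/2)*ρ*m*(1+m)*p^2
              + (ρ^2*(1+m) - 2*ρ)*(p*x))
            + ((-2 + (5/2)*ρ*(1+m))*y^2 - (3/2)*ρ*m*(1+m)*q^2
              + (ρ^2*(1+m) - 2*ρ)*(q*y)) := by
          simp only [hL, hE, hD]
          linear_combination (2*x + 2*ρ*p) * e1 + (2*y + 2*ρ*q) * e2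
        have comp : ∀ X u : ℝ, (-2 + (5/2)*ρ*(1+m))*X^2 - (3/2)*ρ*m*(1+m)*u^2
            + (ρ^2*(1+m) - 2*ρ)*(u*X) ≤ 0 := by
          intro X u
          have hu0 : 0 ≤ ρ*(1+m) := mul_nonneg hρ0 (by linarith)
          have hA : (0:ℝ) ≤ 3/2 - (5/2)*ρ*(1+m) := by nlinarith
          have hB : (0:ℝ) ≤ (3/2)*ρ*(m*(1+m)) - (ρ*(2-ρ*(1+m)))^2/2 := by
            have s1 : ρ*(2 - ρ*(1+m))^2 ≤ 4*ρ := by nlinarith [mul_nonneg hρ0 hu0]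
            have s2 : (ρ*(2-ρ*(1+m)))^2 = ρ * (ρ*(2 - ρ*(1+m))^2) := by ring
            have s3 : ρ * (ρ*(2 - ρ*(1+m))^2) ≤ ρ * (4*ρ) :=
              mul_le_mul_of_nonneg_left s1 hρ0
            have s4 : ρ * (4*ρ) ≤ 2*ρ*(m*(1+m)) := by nlinarith [mul_nonneg hρ0 hρ0]
            have s5 : 0 ≤ ρ*(m*(1+m)) := by positivity
            nlinarith [s2, s3, s4, s5]
          nlinarith [sq_nonneg (X + (ρ*(2-ρ*(1+m)))*u), sq_nonneg (X - (ρ*(2-ρ*(1+m)))*u),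
            mul_nonneg hA (sq_nonneg X), mul_nonneg hB (sq_nonneg u)]
        rw [hquad]
        have c1 := comp x p
        have c2 := comp y q
        linarith
      have heq : ρ/2 * Real.exp (ρ*s/2) * L s + Real.exp (ρ*s/2) * D s
          = Real.exp (ρ*s/2) * (ρ/2 * L s + D s) := by ring
      rw [heq]
      exact mul_nonpos_iff.mpr (Or.inl ⟨(Real.exp_pos _).le, key⟩)
  -- comparison L vs E
  have hcomp : ∀ s : ℝ, E s ≤ 2 * L s ∧ L s ≤ (3/2) * E s := by
    intro s
    have h1m : (0:ℝ) ≤ 1+m := by linarith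
    have h3' : (0:ℝ) ≤ m - 4*ρ^2 := by linarith
    constructor
    · simp only [hL, hE]
      nlinarith [mul_nonneg h1m (sq_nonneg (deriv P s + 2*ρ*P s)),
        mul_nonneg h1m (sq_nonneg (deriv Q s + 2*ρ*Q s)),
        mul_nonneg h1m (mul_nonneg h3' (sq_nonneg (P s))),
        mul_nonneg h1m (mul_nonneg h3' (sq_nonneg (Q s)))]
    · simp only [hL, hE]
      nlinarith [mul_nonneg h1m (sq_nonneg (deriv P s - 2*ρ*P s)),
        mul_nonneg h1m (sq_nonneg (deriv Q s - 2*ρ*Q s)),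
        mul_nonneg h1m (mul_nonneg h3' (sq_nonneg (P s))),
        mul_nonneg h1m (mul_nonneg h3' (sq_nonneg (Q s)))]
  have hE0 : 0 ≤ E 0 := by
    simp only [hE]
    have h1m : (0:ℝ) ≤ 1 + m := by linarith
    positivity
  have hmono := hGanti (Set.self_mem_Ici) (Set.mem_Ici.mpr ht.le) ht.le
  -- G t ≤ G 0 = L 0
  have hG0 : G 0 = L 0 := by simp [hG]
  have hGt : Real.exp (ρ*t/2) * L t ≤ L 0 := by
    rw [← hG0]; exact hmono
  have hLt : L t ≤ Real.exp (-(ρ*t/2)) * L 0 := by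
    have hpos : (0:ℝ) < Real.exp (ρ*t/2) := Real.exp_pos _
    rw [Real.exp_neg]
    rw [inv_mul_eq_div, le_div_iff₀ hpos]
    linarith [hGt]
  have hexp_nonneg : (0:ℝ) ≤ Real.exp (-(ρ*t/2)) := (Real.exp_pos _).le
  have h5 : E t ≤ 2 * L t := (hcomp t).1
  have h6 : L 0 ≤ (3/2) * E 0 := (hcomp 0).2
  have h7 : Real.exp (-(ρ*t/2)) * L 0 ≤ Real.exp (-(ρ*t/2)) * ((3/2) * E 0) :=
    mul_le_mul_of_nonneg_left h6 hexp_nonneg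
  have h8 : E t ≤ 3 * Real.exp (-(ρ*t/2)) * E 0 := by clear_value E L D G; nlinarith [h5, hLt, h7]
  have hfin : E t ≤ 6 * Real.exp (-(ρ*t/2)) * E 0 := by clear_value E L D G; nlinarith [h8, mul_nonneg hexp_nonneg hE0]
  have : -(ρ*t/2) = -(ρ * t / 2) := by ring
  simpa [hE] using hfin

lemma aux_decay_complex (m ρ : ℝ) (hm : 0 ≤ m) (hρ0 : 0 ≤ ρ)
    (h1 : 2*ρ*(1+m) ≤ 1) (h2 : 2*ρ ≤ m*(1+m)) (h3 : 4*ρ^2 ≤ m)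
    (w : ℝ → ℂ) (hw : ContDiff ℝ 2 w)
    (hode : ∀ t > (0:ℝ), ((1+m : ℝ) : ℂ) * deriv (deriv w) t
        + ((m*(1+m) : ℝ) : ℂ) * w t + deriv w t = 0)
    (t : ℝ) (ht : 0 < t) :
    (1+m) * ‖deriv w t‖ ^ 2 + m*(1+m) * ‖w t‖ ^ 2
      ≤ 6 * Real.exp (-(ρ * t / 2)) *
        ((1+m) * ‖deriv w 0‖ ^ 2 + m*(1+m) * ‖w 0‖ ^ 2) := by
  have hwd : Differentiable ℝ w := hw.differentiable (by norm_num)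
  have hwd2 : Differentiable ℝ (deriv w) :=
    ((contDiff_succ_iff_deriv.mp (show ContDiff ℝ ((1:ℕ)+1) w from hw)).2.2).differentiable (by norm_num)
  set P : ℝ → ℝ := fun s => (w s).re with hPdef
  set Q : ℝ → ℝ := fun s => (w s).im with hQdef
  have hP : ContDiff ℝ 2 P := Complex.reCLM.contDiff.comp hw
  have hQ : ContDiff ℝ 2 Q := Complex.imCLM.contDiff.comp hw
  have hdP : deriv P = fun s => (deriv w s).re :=
    funext fun s => (Complex.reCLM.hasFDerivAt.comp_hasDerivAt s (hwd s).hasDerivAt).deriv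
  have hdQ : deriv Q = fun s => (deriv w s).im :=
    funext fun s => (Complex.imCLM.hasFDerivAt.comp_hasDerivAt s (hwd s).hasDerivAt).deriv
  have hd2P : deriv (deriv P) = fun s => (deriv (deriv w) s).re := by
    rw [hdP]
    exact funext fun s => (Complex.reCLM.hasFDerivAt.comp_hasDerivAt s (hwd2 s).hasDerivAt).deriv
  have hd2Q : deriv (deriv Q) = fun s => (deriv (deriv w) s).im := by
    rw [hdQ]
    exact funext fun s => (Complex.imCLM.hasFDerivAt.comp_hasDerivAt s (hwd2 s).hasDerivAt).deriv
  have hodeP : ∀ t > (0:ℝ), (1+m) * deriv (deriv P) t + m*(1+m)* P t + deriv P t = 0 := by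
    intro t ht
    have h := congrArg Complex.re (hode t ht)
    simp only [Complex.add_re, Complex.mul_re, Complex.ofReal_re, Complex.ofReal_im,
      Complex.zero_re, zero_mul, sub_zero] at h
    rw [hd2P, hdP]
    simpa using h
  have hodeQ : ∀ t > (0:ℝ), (1+m) * deriv (deriv Q) t + m*(1+m)* Q t + deriv Q t = 0 := by
    intro t ht
    have h := congrArg Complex.im (hode t ht)
    simp only [Complex.add_im, Complex.mul_im, Complex.ofReal_re, Complex.ofReal_im,
      Complex.zero_im, zero_mul, add_zero] at h
    rw [hd2Q, hdQ]
    simpa using h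
  have key := aux_decay m ρ hm hρ0 h1 h2 h3 P Q hP hQ hodeP hodeQ t ht
  have habs : ∀ z : ℂ, ‖z‖ ^ 2 = z.re ^ 2 + z.im ^ 2 := by
    intro z; rw [Complex.sq_norm, Complex.normSq_apply]; ring
  rw [hdP, hdQ] at key
  simp only [hPdef, hQdef] at key
  simpa [habs] using key

theorem pointwise_energy_decay (n : ℕ) (hn : 1 ≤ n) (ξ : EuclideanSpace ℝ (Fin n))
    (w : ℝ → ℂ) (hw : ContDiff ℝ 2 w)
    (hode : ∀ t > (0:ℝ), ((1 + mlog ξ : ℝ) : ℂ) * deriv (deriv w) t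
        + ((mlog ξ * (1 + mlog ξ) : ℝ) : ℂ) * w t + deriv w t = 0) :
    ∀ t > (0:ℝ),
      ((1 + mlog ξ) * ‖deriv w t‖ ^ 2
          + mlog ξ * (1 + mlog ξ) * ‖w t‖ ^ 2 ≤
        6 * Real.exp (-(rho ξ * t / 2)) *
          ((1 + mlog ξ) * ‖deriv w 0‖ ^ 2
            + mlog ξ * (1 + mlog ξ) * ‖w 0‖ ^ 2)) ∧
      (ξ ≠ 0 →
        ‖w t‖ ^ 2 ≤
          6 * Real.exp (-(rho ξ * t / 2)) *
            (‖deriv w 0‖ ^ 2 / mlog ξ + ‖w 0‖ ^ 2)) := by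
  intro t ht
  set m := mlog ξ with hmdef
  set ρ := rho ξ with hρdef
  have hm : 0 ≤ m := Real.log_nonneg (by nlinarith [sq_nonneg ‖ξ‖])
  have h1m : (0:ℝ) < 1 + m := by linarith
  have hρa : ρ ≤ (1/2) * m * (1 + m) := le_trans (min_le_left _ _) (min_le_left _ _)
  have hρb : ρ ≤ 1 / (2 * (1 + m)) := le_trans (min_le_left _ _) (min_le_right _ _)
  have hρc : ρ ≤ (1/2) * Real.sqrt m := min_le_right _ _
  have hρ0 : 0 ≤ ρ := by
    apply le_min (le_min _ _) _
    · have := mul_nonneg hm h1m.le; nlinarith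
    · positivity
    · positivity
  have h1 : 2*ρ*(1+m) ≤ 1 := by
    have := (le_div_iff₀ (by positivity : (0:ℝ) < 2*(1+m))).mp hρb
    linarith
  have h2 : 2*ρ ≤ m*(1+m) := by linarith
  have h3 : 4*ρ^2 ≤ m := by
    nlinarith [Real.sq_sqrt hm, Real.sqrt_nonneg m, hρc, hρ0]
  have hode' : ∀ t > (0:ℝ), ((1+m : ℝ) : ℂ) * deriv (deriv w) t
      + ((m*(1+m) : ℝ) : ℂ) * w t + deriv w t = 0 := hode
  have main := aux_decay_complex m ρ hm hρ0 h1 h2 h3 w hw hode' t ht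
  refine ⟨main, ?_⟩
  intro hξ
  have hmpos : 0 < m := by
    have hnorm : 0 < ‖ξ‖ := norm_pos_iff.mpr hξ
    exact Real.log_pos (by nlinarith)
  have hma : 0 < m * (1 + m) := by positivity
  have hstep : m * (1+m) * ‖w t‖ ^ 2 ≤
      m * (1+m) * (6 * Real.exp (-(ρ * t / 2)) *
        (‖deriv w 0‖ ^ 2 / m + ‖w 0‖ ^ 2)) := by
    have hrhs : m * (1+m) * (6 * Real.exp (-(ρ * t / 2)) *
        (‖deriv w 0‖ ^ 2 / m + ‖w 0‖ ^ 2))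
        = 6 * Real.exp (-(ρ * t / 2)) *
          ((1+m) * ‖deriv w 0‖ ^ 2 + m*(1+m) * ‖w 0‖ ^ 2) := by
      field_simp
    rw [hrhs]
    have hx : 0 ≤ (1+m) * ‖deriv w t‖ ^ 2 := by positivity
    linarith [main]
  exact le_of_mul_le_mul_left (by linarith [hstep]) hma
end
end

section
/- Define D(ξ) := 1 − 4·m(ξ)·(1+m(ξ))², and for ξ with D(ξ) ≥ 0 define λ₊(ξ) := (−1 + √(D(ξ)))/(2(1+m(ξ))) and λ₋(ξ) := (−1 − √(D(ξ)))/(2(1+m(ξ))). Then there exist positive constants c₁, …, c₈ (independent of ξ) such that for all ξ ∈ ℝⁿ with D(ξ) ≥ 0: (i) c₁·m(ξ) ≤ −λ₊(ξ) ≤ c₂·m(ξ); (ii) c₃ ≤ −λ₋(ξ) ≤ c₄; (iii) c₅ ≤ −(λ₊(ξ)+λ₋(ξ)) ≤ c₆; and (iv) for all ξ with moreover D(ξ) ≥ 1/4, c₇ ≤ λ₊(ξ) − λ₋(ξ) ≤ c₈. -/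
open MeasureTheory Real

noncomputable section

theorem characteristic_roots_equivalence (n : ℕ) :
    ∃ c₁ c₂ c₃ c₄ c₅ c₆ c₇ c₈ : ℝ,
      0 < c₁ ∧ 0 < c₂ ∧ 0 < c₃ ∧ 0 < c₄ ∧ 0 < c₅ ∧ 0 < c₆ ∧ 0 < c₇ ∧ 0 < c₈ ∧
      ∀ ξ : EuclideanSpace ℝ (Fin n),
        0 ≤ 1 - 4 * mlog ξ * (1 + mlog ξ) ^ 2 →
        (c₁ * mlog ξ ≤
            -((-1 + Real.sqrt (1 - 4 * mlog ξ * (1 + mlog ξ) ^ 2)) / (2 * (1 + mlog ξ))) ∧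
          -((-1 + Real.sqrt (1 - 4 * mlog ξ * (1 + mlog ξ) ^ 2)) / (2 * (1 + mlog ξ))) ≤
            c₂ * mlog ξ) ∧
        (c₃ ≤ -((-1 - Real.sqrt (1 - 4 * mlog ξ * (1 + mlog ξ) ^ 2)) / (2 * (1 + mlog ξ))) ∧
          -((-1 - Real.sqrt (1 - 4 * mlog ξ * (1 + mlog ξ) ^ 2)) / (2 * (1 + mlog ξ))) ≤ c₄) ∧
        (c₅ ≤ -(((-1 + Real.sqrt (1 - 4 * mlog ξ * (1 + mlog ξ) ^ 2)) / (2 * (1 + mlog ξ)))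
              + ((-1 - Real.sqrt (1 - 4 * mlog ξ * (1 + mlog ξ) ^ 2)) / (2 * (1 + mlog ξ)))) ∧
          -(((-1 + Real.sqrt (1 - 4 * mlog ξ * (1 + mlog ξ) ^ 2)) / (2 * (1 + mlog ξ)))
              + ((-1 - Real.sqrt (1 - 4 * mlog ξ * (1 + mlog ξ) ^ 2)) / (2 * (1 + mlog ξ)))) ≤ c₆) ∧
        ((1:ℝ) / 4 ≤ 1 - 4 * mlog ξ * (1 + mlog ξ) ^ 2 →
          c₇ ≤ ((-1 + Real.sqrt (1 - 4 * mlog ξ * (1 + mlog ξ) ^ 2)) / (2 * (1 + mlog ξ)))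
              - ((-1 - Real.sqrt (1 - 4 * mlog ξ * (1 + mlog ξ) ^ 2)) / (2 * (1 + mlog ξ))) ∧
            ((-1 + Real.sqrt (1 - 4 * mlog ξ * (1 + mlog ξ) ^ 2)) / (2 * (1 + mlog ξ)))
              - ((-1 - Real.sqrt (1 - 4 * mlog ξ * (1 + mlog ξ) ^ 2)) / (2 * (1 + mlog ξ))) ≤ c₈) := by
  refine ⟨1, 5/2, 2/5, 1, 4/5, 1, 2/5, 1, by norm_num, by norm_num, by norm_num,
    by norm_num, by norm_num, by norm_num, by norm_num, by norm_num, ?_⟩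
  intro ξ hD
  set m := mlog ξ with hmdef
  have hm : 0 ≤ m := Real.log_nonneg (by nlinarith [sq_nonneg ‖ξ‖])
  have hm4 : m ≤ 1/4 := by nlinarith [mul_nonneg hm (mul_nonneg hm hm), mul_nonneg hm hm]
  set D := 1 - 4 * m * (1 + m) ^ 2 with hDdef
  set s := Real.sqrt D with hsdef
  have hs0 : 0 ≤ s := Real.sqrt_nonneg _
  have hs2 : s ^ 2 = D := Real.sq_sqrt hD
  have hs1 : s ≤ 1 := by nlinarith
  have hden : (0:ℝ) < 2 * (1 + m) := by linarith
  have e1 : -((-1 + s) / (2 * (1 + m))) = (1 - s) / (2 * (1 + m)) := by ring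
  have e2 : -((-1 - s) / (2 * (1 + m))) = (1 + s) / (2 * (1 + m)) := by ring
  have e3 : -(((-1 + s) / (2 * (1 + m))) + ((-1 - s) / (2 * (1 + m)))) = 2 / (2 * (1 + m)) := by
    field_simp; ring
  have e4 : ((-1 + s) / (2 * (1 + m))) - ((-1 - s) / (2 * (1 + m))) = (2 * s) / (2 * (1 + m)) := by
    field_simp; ring
  refine ⟨⟨?_, ?_⟩, ⟨?_, ?_⟩, ⟨?_, ?_⟩, fun hD4 => ⟨?_, ?_⟩⟩
  · rw [e1, le_div_iff₀ hden]
    nlinarith [mul_nonneg hm hs0, mul_nonneg (mul_nonneg hm hm) hs0, sq_nonneg (1 - s),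
      mul_nonneg (mul_nonneg hm hm) hm]
  · rw [e1, div_le_iff₀ hden]
    nlinarith [mul_nonneg hm hs0, mul_nonneg (mul_nonneg hm hm) hs0,
      mul_nonneg (mul_nonneg hm hm) hm]
  · rw [e2, le_div_iff₀ hden]; nlinarith
  · rw [e2, div_le_iff₀ hden]; nlinarith
  · rw [e3, le_div_iff₀ hden]; nlinarith
  · rw [e3, div_le_iff₀ hden]; nlinarith
  · rw [e4, le_div_iff₀ hden]
    have hshalf : (1:ℝ)/2 ≤ s := by
      have : (1/2:ℝ) = Real.sqrt (1/4) := by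
        rw [show (1/4:ℝ) = (1/2)^2 by norm_num, Real.sqrt_sq]; norm_num
      rw [this]; exact Real.sqrt_le_sqrt hD4
    nlinarith [mul_nonneg hs0 hm]
  · rw [e4, div_le_iff₀ hden]; nlinarith
end
end

section
/- Let n ≥ 1, let u₀, u₁ ∈ L^{1,1}(ℝⁿ) ∩ L²(ℝⁿ), and let v be a Fourier-space solution of the plate equation with data (u₀, u₁). Then there exist constants C > 0 and T ≥ 1 such that for all t ≥ T: ∫_{|ξ| ≤ η} |v(t,ξ) − φ₁(t,ξ)|² dξ ≤ C·(‖u₀‖²_{1,1} + ‖u₁‖²_{1,1})·t^{-(n+2)/2}. -/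
set_option maxHeartbeats 4000000


open MeasureTheory Real

noncomputable section

lemma eq_at_zero {w : ℝ → ℂ} (hw : ContDiff ℝ 2 w) {a b : ℝ}
    (heq : ∀ t, 0 < t → deriv (deriv w) t + (a:ℂ) * deriv w t + (b:ℂ) * w t = 0) :
    ∀ t, 0 ≤ t → deriv (deriv w) t + (a:ℂ) * deriv w t + (b:ℂ) * w t = 0 := by
  have h2 : ContDiff ℝ (1+1) w := by norm_num; exact hw
  obtain ⟨hdiff, -, h1⟩ := contDiff_succ_iff_deriv.mp h2
  obtain ⟨hdiff1, hcont2⟩ := contDiff_one_iff_deriv.mp h1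
  have hF : Continuous fun t => deriv (deriv w) t + (a:ℂ) * deriv w t + (b:ℂ) * w t := by
    fun_prop
  intro t ht
  rcases eq_or_lt_of_le ht with rfl | ht
  · have h1 : Filter.Tendsto (fun t => deriv (deriv w) t + (a:ℂ) * deriv w t + (b:ℂ) * w t)
        (nhdsWithin 0 (Set.Ioi 0)) (nhds (deriv (deriv w) 0 + (a:ℂ) * deriv w 0 + (b:ℂ) * w 0)) :=
      (hF.tendsto 0).mono_left nhdsWithin_le_nhds
    have h2 : Filter.Tendsto (fun t => deriv (deriv w) t + (a:ℂ) * deriv w t + (b:ℂ) * w t)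
        (nhdsWithin 0 (Set.Ioi 0)) (nhds 0) := by
      apply Filter.Tendsto.congr' _ tendsto_const_nhds
      filter_upwards [self_mem_nhdsWithin] with x hx
      exact (heq x hx).symm
    exact tendsto_nhds_unique h1 h2
  · exact heq t ht

/-- constancy on [0,∞) from zero derivative on [0,∞) -/
lemma const_of_deriv_zero {g : ℝ → ℂ} (hg : Continuous g)
    (hd : ∀ t, 0 ≤ t → HasDerivAt g 0 t) : ∀ t, 0 ≤ t → g t = g 0 := by
  intro t ht
  have := constant_of_has_deriv_right_zero (f := g) (a := 0) (b := t)
    (hg.continuousOn) (fun x hx => ((hd x hx.1).hasDerivWithinAt))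
  exact this t ⟨ht, le_refl t⟩

/-- representation of solutions of 2nd order linear ODE -/
lemma ode_rep {w : ℝ → ℂ} (hw : ContDiff ℝ 2 w) {a b l1 l2 : ℝ}
    (heq : ∀ t, 0 < t → deriv (deriv w) t + (a:ℂ) * deriv w t + (b:ℂ) * w t = 0)
    (hsum : l1 + l2 = -a) (hprod : l1 * l2 = b) (hne : l1 ≠ l2) :
    ∀ t, 0 ≤ t →
      w t = (w 0 - (deriv w 0 - l1 * w 0) / ((l2:ℂ) - l1)) * Complex.exp (l1 * t)
          + ((deriv w 0 - l1 * w 0) / ((l2:ℂ) - l1)) * Complex.exp (l2 * t) := by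
  have heq0 := eq_at_zero hw heq
  have h2 : ContDiff ℝ (1+1) w := by norm_num; exact hw
  obtain ⟨hdiff, -, h1⟩ := contDiff_succ_iff_deriv.mp h2
  obtain ⟨hdiff1, hcont2⟩ := contDiff_one_iff_deriv.mp h1
  have hwd : ∀ t, HasDerivAt w (deriv w t) t := fun t => (hdiff t).hasDerivAt
  have hwd2 : ∀ t, HasDerivAt (deriv w) (deriv (deriv w) t) t := fun t => (hdiff1 t).hasDerivAt
  set z : ℝ → ℂ := fun t => deriv w t - (l1:ℂ) * w t with hz
  have hzd : ∀ t, HasDerivAt z (deriv (deriv w) t - (l1:ℂ) * deriv w t) t := by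
    intro t
    exact (hwd2 t).sub ((hwd t).const_mul _)
  have hzc : Continuous z := by fun_prop
  -- step 1 : z t = z 0 * exp (l2 t) for t ≥ 0
  have step1 : ∀ t, 0 ≤ t → z t = z 0 * Complex.exp (l2 * t) := by
    have hg : ∀ t, 0 ≤ t →
        HasDerivAt (fun t : ℝ => Complex.exp (-(l2:ℂ) * t) * z t) 0 t := by
      intro t ht
      have he : HasDerivAt (fun t : ℝ => Complex.exp (-(l2:ℂ) * t))
          (-(l2:ℂ) * Complex.exp (-(l2:ℂ) * t)) t := by
        have := (Complex.hasDerivAt_exp (-(l2:ℂ) * t)).comp t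
          ((hasDerivAt_id t).ofReal_comp.const_mul (-(l2:ℂ)))
        simpa [mul_comm, Function.comp_def] using this
      have := he.mul (hzd t)
      refine this.congr_deriv ?_
      symm
      have hE := heq0 t ht
      have hsC : (l1:ℂ) + l2 = -(a:ℂ) := by exact_mod_cast hsum
      have hpC : (l1:ℂ) * l2 = (b:ℂ) := by exact_mod_cast hprod
      simp only [hz]
      linear_combination (-(Complex.exp (-(l2:ℂ) * t))) * hE
        + (Complex.exp (-(l2:ℂ) * t) * deriv w t) * hsC
        - Complex.exp (-(l2:ℂ) * t) * w t * hpC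
    have hc : Continuous fun t : ℝ => Complex.exp (-(l2:ℂ) * t) * z t := by fun_prop
    intro t ht
    have := const_of_deriv_zero hc hg t ht
    have h2' : z t = (Complex.exp (-((l2:ℂ) * t)) * z t) * Complex.exp ((l2:ℂ) * t) := by
      rw [mul_comm (Complex.exp (-((l2:ℂ)*t))) (z t), mul_assoc, ← Complex.exp_add]
      simp
    simp only [neg_mul, Complex.ofReal_zero, mul_zero, neg_zero, Complex.exp_zero, one_mul] at this
    rw [h2', this]
  -- step 2 : conclude
  set B : ℂ := (deriv w 0 - l1 * w 0) / ((l2:ℂ) - l1) with hB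
  have hl : ((l2:ℂ) - l1) ≠ 0 :=
    sub_ne_zero.mpr (by exact_mod_cast hne.symm)
  have hz0 : z 0 = B * ((l2:ℂ) - l1) := by
    rw [hB]; field_simp [hz]; rfl
  have step2 : ∀ t, 0 ≤ t →
      (fun t : ℝ => Complex.exp (-(l1:ℂ) * t) * (w t - B * Complex.exp ((l2:ℂ) * t))) t
      = (fun t : ℝ => Complex.exp (-(l1:ℂ) * t) * (w t - B * Complex.exp ((l2:ℂ) * t))) 0 := by
    apply const_of_deriv_zero (by fun_prop)
    intro t ht
    have he1 : HasDerivAt (fun t : ℝ => Complex.exp (-(l1:ℂ) * t))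
        (-(l1:ℂ) * Complex.exp (-(l1:ℂ) * t)) t := by
      have := (Complex.hasDerivAt_exp (-(l1:ℂ) * t)).comp t
        ((hasDerivAt_id t).ofReal_comp.const_mul (-(l1:ℂ)))
      simpa [mul_comm, Function.comp_def] using this
    have he2 : HasDerivAt (fun t : ℝ => Complex.exp ((l2:ℂ) * t))
        ((l2:ℂ) * Complex.exp ((l2:ℂ) * t)) t := by
      have := (Complex.hasDerivAt_exp ((l2:ℂ) * t)).comp t
        ((hasDerivAt_id t).ofReal_comp.const_mul ((l2:ℂ)))
      simpa [mul_comm, Function.comp_def] using this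
    have hin : HasDerivAt (fun t : ℝ => w t - B * Complex.exp ((l2:ℂ) * t))
        (deriv w t - B * ((l2:ℂ) * Complex.exp ((l2:ℂ) * t))) t :=
      (hwd t).sub (he2.const_mul B)
    have := he1.mul hin
    refine this.congr_deriv ?_
    symm
    have hzt := step1 t ht
    simp only [hz] at hzt
    have hB' : B * ((l2:ℂ) - l1) = deriv w 0 - l1 * w 0 := by
      rw [hB]; field_simp
    linear_combination (-(Complex.exp (-(l1:ℂ) * t))) * hzt
      + Complex.exp (-(l1:ℂ) * t) * Complex.exp ((l2:ℂ) * t) * hB'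
  intro t ht
  have h3 := step2 t ht
  simp only [Complex.ofReal_zero, mul_zero, neg_zero, Complex.exp_zero, mul_one, one_mul] at h3
  have hexp' : Complex.exp ((l1:ℂ) * t) * Complex.exp (-(l1:ℂ) * t) = 1 := by
    rw [← Complex.exp_add]; ring_nf; exact Complex.exp_zero
  have key : Complex.exp ((l1:ℂ) * t) * (Complex.exp (-(l1:ℂ) * t) * (w t - B * Complex.exp ((l2:ℂ) * t))) = w t - B * Complex.exp ((l2:ℂ) * t) := by
    rw [← mul_assoc, hexp', one_mul]
  rw [h3] at key
  linear_combination -key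





lemma norm11_nonneg {n : ℕ} (u : EuclideanSpace ℝ (Fin n) → ℂ) : 0 ≤ norm11 u :=
  integral_nonneg fun x => by positivity

lemma abs_unit (θ : ℝ) : ‖Complex.exp (-Complex.I * (θ : ℂ))‖ = 1 := by
  rw [Complex.norm_exp]
  simp

lemma abs_unit_sub (θ : ℝ) : ‖Complex.exp (-Complex.I * (θ : ℂ)) - 1‖ ≤ 2 * |θ| := by
  rcases le_or_gt |θ| 1 with hle | hgt
  · have h0 : ‖-Complex.I * (θ : ℂ)‖ = |θ| := by
      rw [norm_mul]; simp
    have := Complex.norm_exp_sub_one_le (x := -Complex.I * (θ : ℂ)) (by rw [h0]; exact hle)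
    rwa [h0] at this
  · have h1 : ‖Complex.exp (-Complex.I * (θ : ℂ)) - 1‖
        ≤ ‖Complex.exp (-Complex.I * (θ : ℂ))‖ + ‖(1:ℂ)‖ :=
      norm_sub_le _ _
    rw [abs_unit, norm_one] at h1
    linarith

lemma cont_e {n : ℕ} (ξ : EuclideanSpace ℝ (Fin n)) :
    Continuous fun x : EuclideanSpace ℝ (Fin n) =>
      Complex.exp (-Complex.I * ((inner ℝ x ξ : ℝ) : ℂ)) :=
  Complex.continuous_exp.comp (continuous_const.mul
    (Complex.continuous_ofReal.comp (continuous_id.inner continuous_const)))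

lemma integrable_eu {n : ℕ} {u : EuclideanSpace ℝ (Fin n) → ℂ} (h : MemL11 u)
    (ξ : EuclideanSpace ℝ (Fin n)) :
    Integrable (fun x => Complex.exp (-Complex.I * ((inner ℝ x ξ : ℝ) : ℂ)) * u x) := by
  apply Integrable.bdd_mul (c := 1) h.1 (cont_e ξ).aestronglyMeasurable
  exact Filter.Eventually.of_forall fun x => by rw [abs_unit]

lemma abs_ft_le {n : ℕ} {u : EuclideanSpace ℝ (Fin n) → ℂ} (h : MemL11 u)
    (ξ : EuclideanSpace ℝ (Fin n)) : ‖ft u ξ‖ ≤ norm11 u := by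
  rw [ft]
  refine (norm_integral_le_integral_norm _).trans ?_
  show (∫ x, ‖Complex.exp (-Complex.I * ((inner ℝ x ξ : ℝ) : ℂ)) * u x‖)
      ≤ ∫ x, (1 + ‖x‖) * ‖u x‖
  apply integral_mono (integrable_eu h ξ).norm h.2
  intro x
  dsimp only
  rw [norm_mul, abs_unit, one_mul]
  have h3 : (0:ℝ) ≤ ‖u x‖ := norm_nonneg _
  nlinarith [norm_nonneg x]

lemma abs_ft_sub_le {n : ℕ} {u : EuclideanSpace ℝ (Fin n) → ℂ} (h : MemL11 u)
    (ξ : EuclideanSpace ℝ (Fin n)) :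
    ‖ft u ξ - ∫ x, u x‖ ≤ 2 * ‖ξ‖ * norm11 u := by
  have hInt : Integrable (fun x => (Complex.exp (-Complex.I * ((inner ℝ x ξ : ℝ) : ℂ)) - 1) * u x) := by
    apply Integrable.congr ((integrable_eu h ξ).sub h.1)
    filter_upwards with x
    simp only [Pi.sub_apply]
    ring
  have hsub : ft u ξ - (∫ x, u x)
      = ∫ x, (Complex.exp (-Complex.I * ((inner ℝ x ξ : ℝ) : ℂ)) - 1) * u x := by
    rw [ft, ← integral_sub (integrable_eu h ξ) h.1]
    congr 1; ext x; ring
  rw [hsub]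
  refine (norm_integral_le_integral_norm _).trans ?_
  have hInt2 : Integrable (fun x => 2 * ‖ξ‖ * ((1 + ‖x‖) * ‖u x‖)) :=
    h.2.const_mul _
  refine le_trans (integral_mono hInt.norm hInt2 ?_) (le_of_eq ?_)
  · intro x
    dsimp only
    rw [norm_mul]
    have h1 := abs_unit_sub (inner ℝ x ξ : ℝ)
    have h2 : |(inner ℝ x ξ : ℝ)| ≤ ‖x‖ * ‖ξ‖ := abs_real_inner_le_norm x ξ
    have h3 : (0:ℝ) ≤ ‖u x‖ := norm_nonneg _
    have h4 : (0:ℝ) ≤ ‖Complex.exp (-Complex.I * ((inner ℝ x ξ : ℝ) : ℂ)) - 1‖ :=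
      norm_nonneg _
    nlinarith [norm_nonneg x, norm_nonneg ξ, abs_nonneg (inner ℝ x ξ : ℝ)]
  · rw [integral_const_mul]
    rfl


lemma key_ineq {u : ℝ} (hu : 0 ≤ u) : u * Real.exp (-(u/2)) ≤ 1 := by
  have h := Real.add_one_le_exp (u/4)
  have h2 : Real.exp (u/2) = Real.exp (u/4) * Real.exp (u/4) := by
    rw [← Real.exp_add]; ring_nf
  have h3 : u ≤ Real.exp (u/2) := by nlinarith [Real.exp_pos (u/4), sq_nonneg (1 - u/4)]
  have h4 : Real.exp (-(u/2)) = (Real.exp (u/2))⁻¹ := by rw [Real.exp_neg]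
  rw [h4]
  rw [mul_inv_le_iff₀ (Real.exp_pos _)]
  simpa using h3

variable {n : ℕ}

lemma integrable_gauss (b : ℝ) (hb : 0 < b) :
    Integrable (fun x : EuclideanSpace ℝ (Fin n) => Real.exp (-(b * ‖x‖^2))) := by
  have h := GaussianFourier.integrable_cexp_neg_mul_sq_norm_add (V := EuclideanSpace ℝ (Fin n))
    (b := (b:ℂ)) (by simpa using hb) 0 0
  have h2 := h.norm
  apply h2.congr
  filter_upwards with x
  rw [Complex.norm_exp]
  congr 1
  have : (-(b:ℂ) * (‖x‖:ℂ)^2 + 0 * ((inner ℝ (0:EuclideanSpace ℝ (Fin n)) x : ℝ):ℂ))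
      = ((-(b * ‖x‖^2) : ℝ) : ℂ) := by push_cast; ring
  rw [this, Complex.ofReal_re]

lemma integrable_sq_gauss (b : ℝ) (hb : 0 < b) :
    Integrable (fun x : EuclideanSpace ℝ (Fin n) => ‖x‖^2 * Real.exp (-(b * ‖x‖^2))) := by
  have hg := (integrable_gauss (n := n) (b/2) (by linarith)).const_mul (2/b)
  apply hg.mono
  · apply Continuous.aestronglyMeasurable
    fun_prop
  · filter_upwards with x
    have hk := key_ineq (u := b * ‖x‖^2) (by positivity)
    have e1 : Real.exp (-(b * ‖x‖^2)) = Real.exp (-(b * ‖x‖^2/2)) * Real.exp (-(b/2 * ‖x‖^2)) := by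
      rw [← Real.exp_add]; ring_nf
    have hx2 : (0:ℝ) ≤ ‖x‖^2 := by positivity
    rw [Real.norm_eq_abs, Real.norm_eq_abs, abs_of_nonneg (by positivity),
      abs_of_nonneg (by positivity), e1]
    have : ‖x‖^2 * (Real.exp (-(b * ‖x‖^2/2)) * Real.exp (-(b/2 * ‖x‖^2)))
        = (1/b) * ((b * ‖x‖^2) * Real.exp (-(b * ‖x‖^2/2))) * Real.exp (-(b/2 * ‖x‖^2)) := by
      field_simp
    rw [this]
    have h5 : (0:ℝ) < Real.exp (-(b/2 * ‖x‖^2)) := Real.exp_pos _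
    have h6 : (1/b) * ((b * ‖x‖^2) * Real.exp (-(b * ‖x‖^2/2))) ≤ (1/b) := by
      have : (b * ‖x‖^2) * Real.exp (-(b * ‖x‖^2/2)) ≤ 1 := by
        have := key_ineq (u := b*‖x‖^2) (by positivity)
        convert this using 3
      have h7 : (0:ℝ) < 1/b := by positivity
      nlinarith
    calc (1/b) * ((b * ‖x‖^2) * Real.exp (-(b * ‖x‖^2/2))) * Real.exp (-(b/2 * ‖x‖^2))
        ≤ (1/b) * Real.exp (-(b/2 * ‖x‖^2)) := by nlinarith [Real.exp_nonneg (-(b*‖x‖^2/2)), mul_nonneg (mul_nonneg hb.le hx2) (Real.exp_nonneg (-(b*‖x‖^2/2)))]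
      _ = 2/b * Real.exp (-(b/2*‖x‖^2)) / 2 := by ring
      _ ≤ _ := by
        have : (0:ℝ) ≤ 2/b * Real.exp (-(b/2*‖x‖^2)) := by positivity
        linarith

/-- scaling: ∫ ‖x‖² exp(-c‖x‖²) = c^{-(n+2)/2} ∫ ‖x‖² exp(-‖x‖²) -/
lemma gauss_scaling (c : ℝ) (hc : 0 < c) :
    (∫ x : EuclideanSpace ℝ (Fin n), ‖x‖^2 * Real.exp (-(c * ‖x‖^2)))
      = c ^ (-((n:ℝ)+2)/2) * ∫ x : EuclideanSpace ℝ (Fin n), ‖x‖^2 * Real.exp (-(‖x‖^2)) := by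
  have hR : (0:ℝ) < Real.sqrt c := Real.sqrt_pos.mpr hc
  have h := MeasureTheory.Measure.integral_comp_smul_of_nonneg (volume : Measure (EuclideanSpace ℝ (Fin n)))
    (F := ℝ) (fun x => ‖x‖^2 * Real.exp (-(‖x‖^2))) (Real.sqrt c) (hR := hR.le)
  have hnorm : ∀ x : EuclideanSpace ℝ (Fin n), ‖Real.sqrt c • x‖^2 = c * ‖x‖^2 := by
    intro x
    rw [norm_smul]
    simp [mul_pow, Real.sq_sqrt hc.le, Real.norm_eq_abs, abs_of_nonneg hR.le]
  simp only [hnorm] at h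
  have hrank : Module.finrank ℝ (EuclideanSpace ℝ (Fin n)) = n := by simp
  rw [hrank, smul_eq_mul] at h
  simp only [mul_assoc] at h
  rw [integral_const_mul] at h
  -- h : c * ∫ = (√c^n)⁻¹ * G
  have h3 : (∫ x : EuclideanSpace ℝ (Fin n), ‖x‖^2 * Real.exp (-(c * ‖x‖^2)))
      = c⁻¹ * (Real.sqrt c ^ n)⁻¹ * ∫ x : EuclideanSpace ℝ (Fin n), ‖x‖^2 * Real.exp (-(‖x‖^2)) := by
    field_simp at h ⊢
    linarith
  rw [h3]
  congr 1
  rw [Real.sqrt_eq_rpow]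
  rw [← Real.rpow_natCast (c ^ ((1:ℝ)/2)) n, ← Real.rpow_mul hc.le]
  rw [← Real.rpow_neg_one c, ← Real.rpow_neg hc.le, ← Real.rpow_add hc]
  congr 1
  push_cast
  ring

lemma exp_decay (n : ℕ) {t : ℝ} (ht : 1 ≤ t) :
    Real.exp (-(t/2)) ≤ (2*((n:ℝ)+2))^(n+2) * t ^ (-((n:ℝ)+2)/2) := by
  have ht0 : (0:ℝ) < t := lt_of_lt_of_le one_pos ht
  set k : ℕ := n + 2 with hk
  have hk0 : (0:ℝ) < 2*((n:ℝ)+2) := by positivity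
  -- t ≤ 2k e^{t/(2k)}
  have h1 : t / (2*((n:ℝ)+2)) ≤ Real.exp (t / (2*((n:ℝ)+2))) := by
    nlinarith [Real.add_one_le_exp (t / (2*((n:ℝ)+2)))]
  have h2 : t ≤ 2*((n:ℝ)+2) * Real.exp (t / (2*((n:ℝ)+2))) := by
    rw [div_le_iff₀ hk0] at h1
    linarith [h1]
  -- raise to power k
  have h3 : t^k ≤ (2*((n:ℝ)+2))^k * (Real.exp (t / (2*((n:ℝ)+2))))^k := by
    rw [← mul_pow]
    exact pow_le_pow_left₀ ht0.le h2 k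
  have h4 : (Real.exp (t / (2*((n:ℝ)+2))))^k = Real.exp (t/2) := by
    rw [← Real.exp_nat_mul]
    congr 1
    have : ((n:ℝ)+2) ≠ 0 := by positivity
    field_simp [hk]
    rw [hk]; push_cast
    ring
  rw [h4] at h3
  have h5 : t ^ (((n:ℝ)+2)/2) ≤ t ^ ((k:ℕ):ℝ) := by
    apply Real.rpow_le_rpow_of_exponent_le ht
    push_cast [hk]
    linarith
  rw [Real.rpow_natCast] at h5
  have main : t ^ (((n:ℝ)+2)/2) ≤ (2*((n:ℝ)+2))^k * Real.exp (t/2) := le_trans h5 h3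
  have hsplit : t ^ (-((n:ℝ)+2)/2) * t ^ (((n:ℝ)+2)/2) = 1 := by
    have he0 : -((n:ℝ)+2)/2 + ((n:ℝ)+2)/2 = 0 := by ring
    rw [← Real.rpow_add ht0, he0, Real.rpow_zero]
  have hrp : (0:ℝ) < t ^ (-((n:ℝ)+2)/2) := Real.rpow_pos_of_pos ht0 _
  have hee : Real.exp (t/2) * Real.exp (-(t/2)) = 1 := by
    rw [← Real.exp_add]; norm_num
  calc Real.exp (-(t/2)) = (t ^ (-((n:ℝ)+2)/2) * t ^ (((n:ℝ)+2)/2)) * Real.exp (-(t/2)) := by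
        rw [hsplit, one_mul]
    _ ≤ (t ^ (-((n:ℝ)+2)/2) * ((2*((n:ℝ)+2))^k * Real.exp (t/2))) * Real.exp (-(t/2)) := by
        have := Real.exp_pos (-(t/2))
        nlinarith [mul_le_mul_of_nonneg_left main hrp.le]
    _ = (2*((n:ℝ)+2))^k * t ^ (-((n:ℝ)+2)/2) * (Real.exp (t/2) * Real.exp (-(t/2))) := by ring
    _ = (2*((n:ℝ)+2))^k * t ^ (-((n:ℝ)+2)/2) := by rw [hee, mul_one]

-- real facts prefix
-- real facts about the roots
lemma root_facts {m s l1 l2 : ℝ} (hm0 : 0 ≤ m) (hm1 : m ≤ 1)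
    (hD : 1/4 ≤ 1 - 4*m*(1+m)^2)
    (hs : s = Real.sqrt (1 - 4*m*(1+m)^2))
    (hl1 : l1 = (-1+s)/(2*(1+m))) (hl2 : l2 = (-1-s)/(2*(1+m))) :
    (1/2 ≤ s ∧ s ≤ 1) ∧
    (l1 ≤ -(m*(1+m)) ∧ -(16*m) ≤ l1) ∧
    (-(64*m^2) ≤ l1 + m*(1+m)) ∧
    (l2 ≤ -(1/4)) ∧
    (1/4 ≤ l1 - l2 ∧ l1 - l2 ≤ 1) ∧
    (0 ≤ 1 + l2 - l1 ∧ 1 + l2 - l1 ≤ 19*m) := by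
  have hp : (0:ℝ) < 2*(1+m) := by linarith
  have hp1 : (0:ℝ) < 1+m := by linarith
  have hDnn : (0:ℝ) ≤ 1 - 4*m*(1+m)^2 := by linarith
  have hs2 : s^2 = 1 - 4*m*(1+m)^2 := by rw [hs]; exact Real.sq_sqrt hDnn
  have hsnn : 0 ≤ s := hs ▸ Real.sqrt_nonneg _
  have hs_ub : s ≤ 1 := by nlinarith
  have hs_lb : 1/2 ≤ s := by nlinarith [sq_nonneg (s - 1/2)]
  have f2 : (1-s)*(1+s) = 4*m*(1+m)^2 := by nlinarith
  have f3 : 2*m*(1+m)^2 ≤ 1-s := by nlinarith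
  have f4 : 1-s ≤ 4*m*(1+m)^2 := by nlinarith
  refine ⟨⟨hs_lb, hs_ub⟩, ⟨?_, ?_⟩, ?_, ?_, ?_, ?_, ?_⟩
  · rw [hl1, div_le_iff₀ hp]; nlinarith
  · rw [hl1, le_div_iff₀ hp]; nlinarith
  · have heq : l1 + m*(1+m) = (-1+s+2*m*(1+m)^2)/(2*(1+m)) := by
      rw [hl1]; field_simp
    have g1 : (0:ℝ) ≤ 1 - s := by linarith
    have g2 : (1-s)^2 ≤ 16*m^2*(1+m)^4 := by
      have h := mul_le_mul f4 f4 g1 (by positivity : (0:ℝ) ≤ 4*m*(1+m)^2)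
      nlinarith [h]
    have g3 : -1+s+2*m*(1+m)^2 = -(1-s)^2/2 := by linear_combination hs2 / 2
    have g4 : 16*m^2*(1+m)^4 ≤ 128*(m^2*(1+m)) := by nlinarith [sq_nonneg m, hm0, hm1]
    rw [heq, le_div_iff₀ hp, g3]
    nlinarith [g2, g4]
  · rw [hl2, div_le_iff₀ hp]; nlinarith
  · have heq : l1 - l2 = s/(1+m) := by rw [hl1, hl2]; field_simp; ring
    constructor
    · rw [heq, le_div_iff₀ hp1]; nlinarith
    · rw [heq, div_le_iff₀ hp1]; nlinarith
  · have heq : 1 + l2 - l1 = (1+m-s)/(1+m) := by rw [hl1, hl2]; field_simp; ring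
    rw [heq]
    apply div_nonneg (by nlinarith) hp1.le
  · have heq : 1 + l2 - l1 = (1+m-s)/(1+m) := by rw [hl1, hl2]; field_simp; ring
    rw [heq, div_le_iff₀ hp1]
    nlinarith

lemma abs_exp_real (x t : ℝ) :
    ‖Complex.exp ((x:ℂ) * (t:ℂ))‖ = Real.exp (x*t) := by
  rw [Complex.norm_exp]
  congr 1
  have : ((x:ℂ) * (t:ℂ)) = ((x*t : ℝ) : ℂ) := by push_cast; ring
  rw [this, Complex.ofReal_re]

/-- pointwise estimate -/
lemma pointwise_est {m r t s l1 l2 : ℝ} {u0 u1 P0 P1 : ℂ} {K0 K1 : ℝ}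
    (hm0 : 0 ≤ m) (hmr : m ≤ r^2) (hrm : r^2/2 ≤ m) (hr0 : 0 ≤ r) (hr1 : r ≤ 1)
    (hD : 1/4 ≤ 1 - 4*m*(1+m)^2)
    (hs : s = Real.sqrt (1 - 4*m*(1+m)^2))
    (hl1 : l1 = (-1+s)/(2*(1+m))) (hl2 : l2 = (-1-s)/(2*(1+m)))
    (hK0 : 0 ≤ K0) (hK1 : 0 ≤ K1)
    (hu0 : ‖u0‖ ≤ K0) (hu1 : ‖u1‖ ≤ K1)
    (hP0 : ‖u0 - P0‖ ≤ 2*r*K0) (hP1 : ‖u1 - P1‖ ≤ 2*r*K1)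
    (ht : 1 ≤ t) :
    ‖(u0 - (u1 - l1*u0)/((l2:ℂ) - l1)) * Complex.exp ((l1:ℂ)*t)
      + ((u1 - l1*u0)/((l2:ℂ) - l1)) * Complex.exp ((l2:ℂ)*t)
      - (P0+P1) * ((Real.exp (-(t*(m*(1+m)))) : ℝ) : ℂ)‖
    ≤ (K0+K1) * (550 * r * Real.exp (-(t*r^2/4)) + 70 * Real.exp (-(t/4))) := by
  have hm1 : m ≤ 1 := by nlinarith [hmr, hr1, hr0, mul_le_mul_of_nonneg_right hr1 hr0]
  obtain ⟨⟨hs_lb, hs_ub⟩, ⟨ha1, ha2⟩, hc, hd, ⟨he, he'⟩, ⟨hf1, hf2⟩⟩ :=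
    root_facts hm0 hm1 hD hs hl1 hl2
  have ht0 : (0:ℝ) ≤ t := by linarith
  have hmr' : m ≤ r := by nlinarith [hmr, mul_le_mul_of_nonneg_right hr1 hr0]
  set B : ℂ := (u1 - l1*u0)/((l2:ℂ) - l1) with hB
  set E1 : ℝ := Real.exp (l1*t) with hE1
  set E2 : ℝ := Real.exp (l2*t) with hE2
  set E : ℝ := Real.exp (-(t*(m*(1+m)))) with hE
  set R : ℝ := Real.exp (-(t*r^2/4)) with hR
  set F : ℝ := Real.exp (-(t/4)) with hF
  have hlne : ((l2:ℂ) - l1) ≠ 0 := by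
    have : l2 ≠ l1 := by intro h; rw [h] at he; linarith
    exact sub_ne_zero.mpr (by exact_mod_cast this)
  have habsl : ‖(l2:ℂ) - l1‖ = l1 - l2 := by
    have : ((l2:ℂ) - l1) = ((l2 - l1 : ℝ) : ℂ) := by push_cast; ring
    rw [this, Complex.norm_real, Real.norm_eq_abs, abs_of_nonpos (by linarith)]
    ring
  -- bound on B
  have hBnum : ‖u1 - l1*u0‖ ≤ K1 + 16*m*K0 := by
    refine (norm_sub_le _ _).trans ?_
    have h1 : ‖(l1:ℂ)*u0‖ = |l1| * ‖u0‖ := by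
      rw [norm_mul, Complex.norm_real, Real.norm_eq_abs]
    have h2 : |l1| ≤ 16*m := by
      rw [abs_le]
      constructor
      · linarith only [ha2]
      · nlinarith only [ha1, hm0]
    have h3 : (0:ℝ) ≤ ‖u0‖ := norm_nonneg _
    rw [h1]
    linarith only [hu1, mul_le_mul h2 hu0 h3 (by positivity : (0:ℝ) ≤ 16*m)]
  have hBabs : ‖B‖ ≤ 64*(K0+K1) := by
    rw [hB, norm_div, habsl]
    rw [div_le_iff₀ (by linarith : (0:ℝ) < l1 - l2)]
    have k1 : 64*(K0+K1)*(1/4) ≤ 64*(K0+K1)*(l1-l2) :=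
      mul_le_mul_of_nonneg_left he (by positivity)
    have k2 : 16*m*K0 ≤ 16*K0 := by
      have := mul_le_mul_of_nonneg_right hm1 hK0
      linarith only [this]
    linarith only [hBnum, k1, k2, hK1]
  -- bound on C1 = u0 - B - (P0 + P1)
  have hC1 : u0 - B - (P0+P1)
      = -((((1 + l2 - l1 : ℝ):ℂ)*u1 - ((l1 : ℝ):ℂ)*u0)/((l2:ℂ) - l1)) + (u0 - P0) + (u1 - P1) := by
    rw [hB]
    field_simp
    push_cast
    ring
  have hnum2 : ‖(((1 + l2 - l1 : ℝ)):ℂ)*u1 - ((l1:ℝ):ℂ)*u0‖ ≤ 19*m*K1 + 16*m*K0 := by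
    refine (norm_sub_le _ _).trans ?_
    rw [norm_mul, norm_mul, Complex.norm_real, Real.norm_eq_abs, Complex.norm_real, Real.norm_eq_abs]
    have h2 : |l1| ≤ 16*m := by
      rw [abs_le]
      constructor
      · linarith only [ha2]
      · nlinarith only [ha1, hm0]
    have h5 : |1+l2-l1| ≤ 19*m := by rw [abs_of_nonneg hf1]; exact hf2
    have h3 : (0:ℝ) ≤ ‖u0‖ := norm_nonneg _
    have h6 : (0:ℝ) ≤ ‖u1‖ := norm_nonneg _
    have h7 : (0:ℝ) ≤ |1+l2-l1| := abs_nonneg _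
    have h8 : (0:ℝ) ≤ |l1| := abs_nonneg _
    nlinarith
  have hterm : ‖-((((1 + l2 - l1 : ℝ):ℂ)*u1 - ((l1 : ℝ):ℂ)*u0)/((l2:ℂ) - l1))‖
      ≤ 140*m*(K0+K1) := by
    rw [norm_neg, norm_div, habsl, div_le_iff₀ (by linarith : (0:ℝ) < l1 - l2)]
    have k1 : 140*m*(K0+K1)*(1/4) ≤ 140*m*(K0+K1)*(l1-l2) :=
      mul_le_mul_of_nonneg_left he (by positivity)
    have k2 : 0 ≤ m*K0 := by positivity
    have k3 : 0 ≤ m*K1 := by positivity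
    linarith only [hnum2, k1, k2, k3]
  have hC1abs : ‖u0 - B - (P0+P1)‖ ≤ 150*r*(K0+K1) := by
    rw [hC1]
    refine le_trans ((norm_add_le _ _).trans (add_le_add
      ((norm_add_le _ _).trans (add_le_add hterm hP0)) hP1)) ?_
    linarith only [mul_le_mul_of_nonneg_right hmr' (show (0:ℝ) ≤ K0+K1 by linarith),
      mul_nonneg hr0 hK0, mul_nonneg hr0 hK1]
  -- abs of P0+P1
  have hPabs : ‖P0+P1‖ ≤ 3*(K0+K1) := by
    have : P0 + P1 = u0 + u1 - (u0 - P0) - (u1 - P1) := by ring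
    rw [this]
    refine le_trans ((norm_sub_le _ _).trans (add_le_add
      ((norm_sub_le _ _).trans (add_le_add
        ((norm_add_le _ _).trans (add_le_add hu0 hu1)) hP0)) hP1)) ?_
    linarith only [mul_le_mul_of_nonneg_right hr1 hK0, mul_le_mul_of_nonneg_right hr1 hK1,
      hK0, hK1]
  -- cast exponentials
  have he1 : Complex.exp ((l1:ℂ)*(t:ℂ)) = ((E1:ℝ):ℂ) := by
    rw [hE1, Complex.ofReal_exp]; congr 1; push_cast; ring
  have he2 : Complex.exp ((l2:ℂ)*(t:ℂ)) = ((E2:ℝ):ℂ) := by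
    rw [hE2, Complex.ofReal_exp]; congr 1; push_cast; ring
  -- real exponential facts
  have hE1E : E1 ≤ E := by
    rw [hE1, hE]; apply Real.exp_le_exp.mpr
    linarith only [mul_le_mul_of_nonneg_right ha1 ht0]
  have hRpos : (0:ℝ) < R := Real.exp_pos _
  have hEpos : (0:ℝ) < E := Real.exp_pos _
  have hE1pos : (0:ℝ) < E1 := Real.exp_pos _
  have hE2pos : (0:ℝ) < E2 := Real.exp_pos _
  have hFpos : (0:ℝ) < F := Real.exp_pos _
  have hR1 : R ≤ 1 := by
    rw [hR]; apply Real.exp_le_one_iff.mpr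
    have : (0:ℝ) ≤ t*r^2/4 := by positivity
    linarith only [this]
  have hERR : E ≤ R*R := by
    rw [hE, hR, ← Real.exp_add]; apply Real.exp_le_exp.mpr
    have hq : r^2/2 ≤ m*(1+m) := by nlinarith only [hrm, hm0]
    linarith only [mul_le_mul_of_nonneg_left hq ht0]
  have hRR : R*R ≤ R := by simpa using mul_le_mul_of_nonneg_right hR1 hRpos.le
  have hE1R : E1 ≤ R := le_trans hE1E (le_trans hERR hRR)
  have hdiffE : E - E1 ≤ 64*m^2*t*E := by
    have hsplitE : E1 = E * Real.exp ((l1 + m*(1+m))*t) := by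
      rw [hE1, hE, ← Real.exp_add]; congr 1; ring
    have hexp_ge : (l1 + m*(1+m))*t + 1 ≤ Real.exp ((l1 + m*(1+m))*t) :=
      Real.add_one_le_exp _
    have hX : -(64*m^2*t) ≤ (l1 + m*(1+m))*t := by
      linarith only [mul_le_mul_of_nonneg_right hc ht0]
    rw [hsplitE]
    have q1 : E*((l1 + m*(1+m))*t + 1) ≤ E*Real.exp ((l1 + m*(1+m))*t) :=
      mul_le_mul_of_nonneg_left hexp_ge hEpos.le
    have q2 : E*(-((l1 + m*(1+m))*t)) ≤ E*(64*m^2*t) :=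
      mul_le_mul_of_nonneg_left (by linarith) hEpos.le
    linarith only [q1, q2]
  have hE2F : E2 ≤ F := by
    rw [hE2, hF]; apply Real.exp_le_exp.mpr
    linarith only [mul_le_mul_of_nonneg_right hd ht0]
  have htr2R : t*r^2*R ≤ 2 := by
    have h := key_ineq (u := t*r^2/2) (by positivity)
    have harg : -(t*r^2/2/2) = -(t*r^2/4) := by ring
    rw [harg] at h
    rw [hR]
    linarith only [h]
  have hm2r4 : m^2 ≤ r^4 := by
    linarith only [mul_le_mul hmr hmr hm0 (sq_nonneg r)]
  have hmtE : m^2*t*E ≤ 2*(r*R) := by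
    have c0 : m^2*t ≤ r^4*t := mul_le_mul_of_nonneg_right hm2r4 ht0
    have c1 : m^2*t*E ≤ r^4*t*(R*R) :=
      mul_le_mul c0 hERR hEpos.le (by positivity)
    have c2 : r^4*t*(R*R) = r^2*(t*r^2*R)*R := by ring
    have c3 : r^2*(t*r^2*R)*R ≤ r^2*2*R :=
      mul_le_mul_of_nonneg_right (mul_le_mul_of_nonneg_left htr2R (by positivity)) hRpos.le
    have c4 : r^2*2*R ≤ 2*(r*R) := by
      have hr2r : r^2 ≤ r := by nlinarith only [hr0, hr1]
      linarith only [mul_le_mul_of_nonneg_right hr2r hRpos.le]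
    have c1' : m^2*t*E ≤ r^2*(t*r^2*R)*R := by rw [← c2]; exact c1
    linarith [c1', c3, c4]
  -- decomposition
  set KK := K0 + K1 with hKK
  have hKKnn : (0:ℝ) ≤ KK := by rw [hKK]; linarith
  have hdecomp : (u0 - B) * Complex.exp ((l1:ℂ)*t) + B * Complex.exp ((l2:ℂ)*t)
      - (P0+P1) * ((E:ℝ):ℂ)
      = (u0 - B - (P0+P1)) * ((E1:ℝ):ℂ) + (P0+P1) * ((E1 - E:ℝ):ℂ) + B * ((E2:ℝ):ℂ) := by
    rw [he1, he2]
    push_cast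
    ring
  rw [hdecomp]
  have habs1 : ‖(u0 - B - (P0+P1)) * ((E1:ℝ):ℂ)‖ ≤ 150*r*KK * E1 := by
    rw [norm_mul, Complex.norm_real, Real.norm_eq_abs, abs_of_pos hE1pos]
    exact mul_le_mul_of_nonneg_right hC1abs hE1pos.le
  have habs2 : ‖(P0+P1) * ((E1 - E:ℝ):ℂ)‖ ≤ 3*KK * (64*m^2*t*E) := by
    rw [norm_mul, Complex.norm_real, Real.norm_eq_abs, abs_of_nonpos (by linarith), neg_sub]
    have h9 : (0:ℝ) ≤ E - E1 := by linarith
    have h10 : (0:ℝ) ≤ 3*KK := by linarith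
    calc ‖P0+P1‖ * (E - E1) ≤ 3*KK * (E - E1) :=
          mul_le_mul_of_nonneg_right hPabs h9
      _ ≤ 3*KK * (64*m^2*t*E) := mul_le_mul_of_nonneg_left hdiffE h10
  have habs3 : ‖B * ((E2:ℝ):ℂ)‖ ≤ 64*KK * F := by
    rw [norm_mul, Complex.norm_real, Real.norm_eq_abs, abs_of_pos hE2pos]
    calc ‖B‖ * E2 ≤ 64*KK * E2 := mul_le_mul_of_nonneg_right hBabs hE2pos.le
      _ ≤ 64*KK * F := mul_le_mul_of_nonneg_left hE2F (by linarith)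
  refine le_trans ((norm_add_le _ _).trans (add_le_add
    ((norm_add_le _ _).trans (add_le_add habs1 habs2)) habs3)) ?_
  have final1 : 150*r*KK*E1 ≤ 150*r*KK*R :=
    mul_le_mul_of_nonneg_left hE1R (by positivity)
  have final2 : 3*KK*(64*m^2*t*E) ≤ 192*KK*(2*(r*R)) := by
    have := mul_le_mul_of_nonneg_left hmtE (by linarith : (0:ℝ) ≤ 192*KK)
    linarith only [this]
  linarith only [final1, final2, mul_nonneg hKKnn (mul_nonneg hr0 hRpos.le),
    mul_nonneg hKKnn hFpos.le]

theorem low_frequency_profile_estimate (n : ℕ) (hn : 1 ≤ n)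
    (u₀ u₁ : EuclideanSpace ℝ (Fin n) → ℂ)
    (h0 : MemL11 u₀) (h1 : MemL11 u₁)
    (h0L2 : MemLp u₀ 2) (h1L2 : MemLp u₁ 2)
    (v : ℝ → EuclideanSpace ℝ (Fin n) → ℂ) (hv : IsFourierSol u₀ u₁ v)
    (η : ℝ) (hη : η ∈ Set.Ioo (0:ℝ) 1)
    (hηD : ∀ ξ : EuclideanSpace ℝ (Fin n), ‖ξ‖ ≤ η →
      (1:ℝ) / 4 ≤ 1 - 4 * mlog ξ * (1 + mlog ξ) ^ 2) :
    ∃ C T : ℝ, 0 < C ∧ 1 ≤ T ∧ ∀ t ≥ T,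
      (∫ ξ in {ξ : EuclideanSpace ℝ (Fin n) | ‖ξ‖ ≤ η},
          ‖v t ξ - prof1 u₀ u₁ t ξ‖ ^ 2) ≤
        C * (norm11 u₀ ^ 2 + norm11 u₁ ^ 2) * t ^ (-((n:ℝ) + 2) / 2) := by
  classical
  set K0 := norm11 u₀ with hK0d
  set K1 := norm11 u₁ with hK1d
  have hK0 : 0 ≤ K0 := norm11_nonneg u₀
  have hK1 : 0 ≤ K1 := norm11_nonneg u₁
  set G : ℝ := ∫ x : EuclideanSpace ℝ (Fin n), ‖x‖^2 * Real.exp (-(‖x‖^2)) with hGd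
  have hGnn : 0 ≤ G := integral_nonneg fun x => by positivity
  set B : Set (EuclideanSpace ℝ (Fin n)) := {ξ : EuclideanSpace ℝ (Fin n) | ‖ξ‖ ≤ η} with hBdef
  have hBeq : B = Metric.closedBall 0 η := by
    ext ξ; simp [hBdef, Metric.mem_closedBall, dist_zero_right]
  have hBmeas : MeasurableSet B := by rw [hBeq]; exact measurableSet_closedBall
  have hBfin : volume B < ⊤ := by rw [hBeq]; exact measure_closedBall_lt_top
  set VB : ℝ := (volume B).toReal with hVBd
  have hVBnn : 0 ≤ VB := ENNReal.toReal_nonneg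
  set C0 : ℝ := 605000*(2:ℝ)^(((n:ℝ)+2)/2)*G + 9800*VB*(2*((n:ℝ)+2))^(n+2) with hC0d
  have hC0nn : 0 ≤ C0 := by
    apply add_nonneg
    · exact mul_nonneg (by positivity) hGnn
    · exact mul_nonneg (mul_nonneg (by norm_num) hVBnn) (by positivity)
  refine ⟨2*C0+1, 1, by linarith, le_refl 1, ?_⟩
  intro t ht
  have ht0 : (0:ℝ) < t := lt_of_lt_of_le one_pos ht
  set tp : ℝ := t ^ (-((n:ℝ)+2)/2) with htpd
  have htp : 0 < tp := Real.rpow_pos_of_pos ht0 _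
  -- pointwise bound
  have hpt : ∀ ξ ∈ B, ‖v t ξ - prof1 u₀ u₁ t ξ‖^2
      ≤ 605000*(K0+K1)^2*(‖ξ‖^2*Real.exp (-(t/2*‖ξ‖^2)))
        + 9800*(K0+K1)^2*Real.exp (-(t/2)) := by
    intro ξ hξ
    have hrη : ‖ξ‖ ≤ η := hξ
    have hr0 : (0:ℝ) ≤ ‖ξ‖ := norm_nonneg ξ
    have hr1 : ‖ξ‖ ≤ 1 := le_trans hrη hη.2.le
    set m := mlog ξ with hmd
    have hm0 : 0 ≤ m := Real.log_nonneg (by nlinarith only [sq_nonneg ‖ξ‖])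
    have hmr : m ≤ ‖ξ‖^2 := by
      have := Real.log_le_sub_one_of_pos (show (0:ℝ) < 1+‖ξ‖^2 by positivity)
      rw [hmd, mlog]; linarith
    have hrm : ‖ξ‖^2/2 ≤ m := by
      have h := Real.log_le_sub_one_of_pos (show (0:ℝ) < (1+‖ξ‖^2)⁻¹ by positivity)
      rw [Real.log_inv] at h
      have h2 : (1+‖ξ‖^2)⁻¹ ≤ 1 - ‖ξ‖^2/2 := by
        rw [inv_le_iff_one_le_mul₀ (by positivity)]
        nlinarith only [hr0, hr1, sq_nonneg ‖ξ‖,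
          mul_le_mul_of_nonneg_left (show ‖ξ‖^2 ≤ 1 by nlinarith only [hr0, hr1]) (sq_nonneg ‖ξ‖)]
      rw [hmd, mlog]
      have hlog : Real.log (1+‖ξ‖^2) ≥ 1 - (1+‖ξ‖^2)⁻¹ := by
        have := Real.log_inv (1+‖ξ‖^2); linarith
      linarith
    have hD : 1/4 ≤ 1 - 4*m*(1+m)^2 := hηD ξ hrη
    -- the ODE data
    obtain ⟨hC2, hODE, h0v, h1v⟩ := hv.2 ξ
    set s := Real.sqrt (1-4*m*(1+m)^2) with hsd
    set l1 := (-1+s)/(2*(1+m)) with hl1d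
    set l2 := (-1-s)/(2*(1+m)) with hl2d
    have hp1 : (0:ℝ) < 1+m := by linarith
    have hs2 : s^2 = 1-4*m*(1+m)^2 := Real.sq_sqrt (by linarith)
    have hsum : l1 + l2 = -(1/(1+m)) := by
      rw [hl1d, hl2d]; field_simp; ring
    have hprod : l1 * l2 = m := by
      rw [hl1d, hl2d]; field_simp; linear_combination -hs2
    have hne : l1 ≠ l2 := by
      have hs_lb : (1/2:ℝ) ≤ s := by
        rw [hsd, show (1/2:ℝ) = Real.sqrt (1/4) by
          rw [show (1/4:ℝ) = (1/2)^2 by norm_num, Real.sqrt_sq (by norm_num)]]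
        exact Real.sqrt_le_sqrt hD
      intro h
      rw [hl1d, hl2d, div_eq_div_iff (by linarith) (by linarith)] at h
      nlinarith only [h, hs_lb, hp1]
    have hnec : ((1+m:ℝ):ℂ) ≠ 0 := Complex.ofReal_ne_zero.mpr (by positivity)
    have key : ∀ τ, 0 < τ → deriv (deriv (fun u => v u ξ)) τ
        + ((1/(1+m) : ℝ):ℂ) * deriv (fun u => v u ξ) τ + ((m:ℝ):ℂ) * (fun u => v u ξ) τ = 0 := by
      intro τ hτ
      have h := hODE τ hτ
      have hnec2 : (1:ℂ)+(m:ℂ) ≠ 0 := by push_cast at hnec ⊢; exact hnec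
      push_cast at h ⊢
      field_simp
      linear_combination h
    have hrep := ode_rep hC2 key hsum hprod hne t (by linarith)
    simp only [h0v, h1v] at hrep
    have hval : v t ξ - prof1 u₀ u₁ t ξ
        = (ft u₀ ξ - (ft u₁ ξ - l1 * ft u₀ ξ)/((l2:ℂ) - l1)) * Complex.exp ((l1:ℂ)*t)
          + ((ft u₁ ξ - l1 * ft u₀ ξ)/((l2:ℂ) - l1)) * Complex.exp ((l2:ℂ)*t)
          - ((∫ x, u₀ x) + (∫ x, u₁ x)) * ((Real.exp (-(t*(m*(1+m)))) : ℝ) : ℂ) := by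
      rw [hrep, prof1, PP]
    have hest := pointwise_est hm0 hmr hrm hr0 hr1 hD hsd hl1d hl2d hK0 hK1
      (abs_ft_le h0 ξ) (abs_ft_le h1 ξ) (abs_ft_sub_le h0 ξ) (abs_ft_sub_le h1 ξ) ht
    rw [← hval] at hest
    set X := ‖v t ξ - prof1 u₀ u₁ t ξ‖ with hXd
    have hXnn : 0 ≤ X := norm_nonneg _
    set R : ℝ := Real.exp (-(t*‖ξ‖^2/4)) with hRd
    set F : ℝ := Real.exp (-(t/4)) with hFd
    have hRR : R*R = Real.exp (-(t/2*‖ξ‖^2)) := by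
      rw [hRd, ← Real.exp_add]; congr 1; ring
    have hFF : F*F = Real.exp (-(t/2)) := by
      rw [hFd, ← Real.exp_add]; congr 1; ring
    have hsq : X^2 ≤ ((K0+K1) * (550 * ‖ξ‖ * R + 70 * F))^2 :=
      pow_le_pow_left₀ hXnn hest 2
    refine hsq.trans ?_
    rw [← hRR, ← hFF]
    have base : (550*‖ξ‖*R+70*F)^2 ≤ 605000*(‖ξ‖*R)^2 + 9800*F^2 := by
      nlinarith only [sq_nonneg (550*‖ξ‖*R - 70*F)]
    have hmul := mul_le_mul_of_nonneg_left base (sq_nonneg (K0+K1))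
    nlinarith only [hmul]
  -- integration
  have hg1int : Integrable (fun ξ : EuclideanSpace ℝ (Fin n) => ‖ξ‖^2 * Real.exp (-(t/2*‖ξ‖^2))) :=
    integrable_sq_gauss (t/2) (by linarith)
  have hg1Bint : IntegrableOn (fun ξ : EuclideanSpace ℝ (Fin n) =>
      605000*(K0+K1)^2*(‖ξ‖^2 * Real.exp (-(t/2*‖ξ‖^2)))) B volume :=
    (hg1int.integrableOn).const_mul _
  have hcBint : IntegrableOn (fun _ : EuclideanSpace ℝ (Fin n) =>
      9800*(K0+K1)^2*Real.exp (-(t/2))) B volume := by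
    exact integrableOn_const hBfin.ne
  have step1 : (∫ ξ in B, ‖v t ξ - prof1 u₀ u₁ t ξ‖^2)
      ≤ ∫ ξ in B, (605000*(K0+K1)^2*(‖ξ‖^2*Real.exp (-(t/2*‖ξ‖^2)))
        + 9800*(K0+K1)^2*Real.exp (-(t/2))) := by
    apply integral_mono_of_nonneg
    · exact Filter.Eventually.of_forall fun ξ => by positivity
    · exact hg1Bint.add hcBint
    · exact ae_restrict_of_forall_mem hBmeas hpt
  have step2 : (∫ ξ in B, (605000*(K0+K1)^2*(‖ξ‖^2*Real.exp (-(t/2*‖ξ‖^2)))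
        + 9800*(K0+K1)^2*Real.exp (-(t/2))))
      = 605000*(K0+K1)^2*(∫ ξ in B, ‖ξ‖^2*Real.exp (-(t/2*‖ξ‖^2)))
        + 9800*(K0+K1)^2*Real.exp (-(t/2)) * VB := by
    rw [integral_add hg1Bint hcBint, integral_const_mul, setIntegral_const, smul_eq_mul, measureReal_def, hVBd]
    ring
  have step3 : (∫ ξ in B, ‖ξ‖^2*Real.exp (-(t/2*‖ξ‖^2))) ≤ (t/2) ^ (-((n:ℝ)+2)/2) * G := by
    refine le_trans (setIntegral_le_integral hg1int
      (Filter.Eventually.of_forall fun ξ => by positivity)) ?_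
    rw [gauss_scaling (t/2) (by linarith), hGd]
  have step4 : (t/2:ℝ) ^ (-((n:ℝ)+2)/2) = tp * (2:ℝ)^(((n:ℝ)+2)/2) := by
    rw [Real.div_rpow ht0.le (by norm_num : (0:ℝ) ≤ 2), htpd, div_eq_mul_inv,
      ← Real.rpow_neg (by norm_num : (0:ℝ) ≤ 2)]
    congr 1
    ring
  have step5 : Real.exp (-(t/2)) ≤ (2*((n:ℝ)+2))^(n+2) * tp := exp_decay n ht
  have a1 : 605000*(K0+K1)^2*(∫ ξ in B, ‖ξ‖^2*Real.exp (-(t/2*‖ξ‖^2)))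
      ≤ 605000*(K0+K1)^2*(tp * (2:ℝ)^(((n:ℝ)+2)/2) * G) := by
    rw [← step4]
    exact mul_le_mul_of_nonneg_left step3 (by positivity)
  have a2 : 9800*(K0+K1)^2*Real.exp (-(t/2)) * VB
      ≤ 9800*(K0+K1)^2*((2*((n:ℝ)+2))^(n+2) * tp) * VB :=
    mul_le_mul_of_nonneg_right
      (mul_le_mul_of_nonneg_left step5 (by positivity)) hVBnn
  have keyC : (∫ ξ in B, ‖v t ξ - prof1 u₀ u₁ t ξ‖^2) ≤ C0 * (K0+K1)^2 * tp := by
    have hring : 605000*(K0+K1)^2*(tp * (2:ℝ)^(((n:ℝ)+2)/2) * G)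
        + 9800*(K0+K1)^2*((2*((n:ℝ)+2))^(n+2) * tp) * VB = C0 * (K0+K1)^2 * tp := by
      rw [hC0d]; ring
    refine le_trans step1 ?_
    rw [step2]
    exact le_trans (add_le_add a1 a2) (le_of_eq hring)
  refine keyC.trans ?_
  have hKK2 : (K0+K1)^2 ≤ 2*(K0^2+K1^2) := by nlinarith only [sq_nonneg (K0-K1)]
  have hfin : C0*(K0+K1)^2 ≤ (2*C0+1)*(K0^2+K1^2) := by
    have h1 := mul_le_mul_of_nonneg_left hKK2 hC0nn
    nlinarith only [h1, sq_nonneg K0, sq_nonneg K1, hC0nn]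
  calc C0 * (K0+K1)^2 * tp ≤ (2*C0+1)*(K0^2+K1^2)*tp :=
        mul_le_mul_of_nonneg_right hfin htp.le
    _ = (2*C0+1)*(K0^2+K1^2)*tp := rfl
end
end

section
/- Let n ≥ 1 and u₀, u₁ ∈ L¹(ℝⁿ). Then there exist constants C₁, C₂ > 0 depending only on n and T ≥ 1 such that for all t ≥ T: C₁·|P₀+P₁|²·t^{-n/2} ≤ ∫_{ℝⁿ} |φ₁(t,ξ)|² dξ ≤ C₂·(‖u₀‖₁² + ‖u₁‖₁²)·t^{-n/2}. -/
open MeasureTheory Real Metric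

noncomputable section

namespace Aux

variable {n : ℕ}

lemma one_add_sq_pos (ξ : EuclideanSpace ℝ (Fin n)) : (0:ℝ) < 1 + ‖ξ‖ ^ 2 := by positivity

lemma mlog_nonneg (ξ : EuclideanSpace ℝ (Fin n)) : 0 ≤ mlog ξ :=
  Real.log_nonneg (by nlinarith [sq_nonneg ‖ξ‖])

lemma mlog_le_sq (ξ : EuclideanSpace ℝ (Fin n)) : mlog ξ ≤ ‖ξ‖ ^ 2 := by
  have := Real.log_le_sub_one_of_pos (one_add_sq_pos ξ)
  simpa [mlog] using this

lemma sq_le_two_mlog {ξ : EuclideanSpace ℝ (Fin n)} (h : ‖ξ‖ ≤ 1) :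
    ‖ξ‖ ^ 2 ≤ 2 * mlog ξ := by
  set x := ‖ξ‖ ^ 2 with hx
  have hx0 : 0 ≤ x := by positivity
  have hx1 : x ≤ 1 := by
    simpa [hx] using (pow_le_one₀ (norm_nonneg ξ) h : ‖ξ‖^2 ≤ 1)
  have hpos : (0:ℝ) < 1 + x := by linarith
  have h1 : Real.log (1+x)⁻¹ ≤ (1+x)⁻¹ - 1 :=
    Real.log_le_sub_one_of_pos (by positivity)
  have h2 : Real.log (1+x)⁻¹ = - Real.log (1+x) := Real.log_inv _
  have h3 : x / (1+x) ≤ Real.log (1+x) := by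
    have : 1 - (1+x)⁻¹ = x / (1+x) := by field_simp; ring
    nlinarith [h1, h2]
  have h4 : x / 2 ≤ x / (1+x) := by
    apply div_le_div_of_nonneg_left hx0 (by linarith) (by linarith)
  have : x / 2 ≤ Real.log (1+x) := le_trans h4 h3
  simpa [mlog, hx] using by linarith [this]

lemma log_two_le_mlog {ξ : EuclideanSpace ℝ (Fin n)} (h : 1 ≤ ‖ξ‖) :
    Real.log 2 ≤ mlog ξ := by
  apply Real.log_le_log (by norm_num)
  nlinarith [h]

lemma continuous_mlog : Continuous fun ξ : EuclideanSpace ℝ (Fin n) => mlog ξ := by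
  apply Continuous.log
  · exact continuous_const.add ((continuous_norm).pow 2)
  · intro x; positivity

lemma sqrt_ge {t : ℝ} (ht : 4*(n:ℝ)^2 ≤ t) : 2*(n:ℝ) ≤ Real.sqrt t := by
  have h : Real.sqrt (4*(n:ℝ)^2) ≤ Real.sqrt t := Real.sqrt_le_sqrt ht
  have : Real.sqrt (4*(n:ℝ)^2) = 2*(n:ℝ) := by
    rw [show 4*(n:ℝ)^2 = (2*(n:ℝ))^2 by ring]
    exact Real.sqrt_sq (by positivity)
  linarith

lemma key_time (hn : 1 ≤ n) {t : ℝ} (ht : 4*(n:ℝ)^2 ≤ t) :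
    Real.exp (-(t * Real.log 2)) ≤ t ^ (-((n:ℝ)/2)) := by
  have hn1 : (1:ℝ) ≤ n := by exact_mod_cast hn
  have ht1 : (1:ℝ) ≤ t := by nlinarith
  have ht0 : (0:ℝ) < t := by linarith
  rw [Real.rpow_def_of_pos ht0]
  apply Real.exp_le_exp.mpr
  set s := Real.sqrt t with hs
  have hs2 : s^2 = t := Real.sq_sqrt ht0.le
  have hsn : 2*(n:ℝ) ≤ s := sqrt_ge ht
  have hlog : Real.log t ≤ 2*s := by
    have h1 : Real.log s ≤ s - 1 := Real.log_le_sub_one_of_pos (by positivity)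
    have h2 : Real.log s = Real.log t / 2 := Real.log_sqrt ht0.le
    linarith
  have hlogt0 : 0 ≤ Real.log t := Real.log_nonneg ht1
  have hl2 : (0.6931471803 : ℝ) < Real.log 2 := Real.log_two_gt_d9
  nlinarith [hsn, hs2, hlog, hlogt0, hl2]

lemma integrable_gauss {t : ℝ} (ht : 0 < t) :
    Integrable (fun ξ : EuclideanSpace ℝ (Fin n) => Real.exp (-t * ‖ξ‖^2)) := by
  have h := (GaussianFourier.integrable_cexp_neg_mul_sq_norm_add (b := (t:ℂ))
    (by simpa using ht) 0 (0 : EuclideanSpace ℝ (Fin n))).norm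
  apply h.congr
  filter_upwards with ξ
  simp [Complex.norm_exp]
  left
  norm_cast

lemma integrable_jb (hn : 1 ≤ n) :
    Integrable (fun ξ : EuclideanSpace ℝ (Fin n) => ((1:ℝ) + ‖ξ‖^2) ^ (-(n:ℝ))) := by
  have h : (Module.finrank ℝ (EuclideanSpace ℝ (Fin n)) : ℝ) < 2*(n:ℝ) := by
    rw [finrank_euclideanSpace_fin]
    have : (1:ℝ) ≤ n := by exact_mod_cast hn
    nlinarith
  have := integrable_rpow_neg_one_add_norm_sq
    (μ := (volume : Measure (EuclideanSpace ℝ (Fin n)))) h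
  simpa [neg_div, mul_div_assoc, mul_comm] using this

lemma key_ub (hn : 1 ≤ n) {t : ℝ} (ht : 4*(n:ℝ)^2 ≤ t)
    (ξ : EuclideanSpace ℝ (Fin n)) :
    Real.exp (-(2*t) * (mlog ξ * (1 + mlog ξ))) ≤
      Real.exp (-t * ‖ξ‖^2) + t ^ (-((n:ℝ)/2)) * ((1:ℝ) + ‖ξ‖^2) ^ (-(n:ℝ)) := by
  have hn1 : (1:ℝ) ≤ n := by exact_mod_cast hn
  have ht1 : (1:ℝ) ≤ t := by nlinarith
  have ht0 : (0:ℝ) < t := by linarith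
  have hm0 := mlog_nonneg ξ
  rcases le_or_gt ‖ξ‖ 1 with h | h
  · have h1 : ‖ξ‖^2 ≤ 2 * mlog ξ := sq_le_two_mlog h
    have hmain : Real.exp (-(2*t) * (mlog ξ * (1+mlog ξ))) ≤ Real.exp (-t * ‖ξ‖^2) := by
      apply Real.exp_le_exp.mpr
      nlinarith [mul_nonneg ht0.le (mul_nonneg hm0 hm0)]
    have h2 : 0 ≤ t ^ (-((n:ℝ)/2)) * ((1:ℝ)+‖ξ‖^2) ^ (-(n:ℝ)) := by positivity
    linarith
  · have hm2 : Real.log 2 ≤ mlog ξ := log_two_le_mlog h.le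
    have hl2 : (0:ℝ) < Real.log 2 := Real.log_pos (by norm_num)
    have hstep : Real.exp (-(2*t) * (mlog ξ * (1+mlog ξ))) ≤
        Real.exp (-(t * Real.log 2)) * Real.exp (-((n:ℝ) * mlog ξ)) := by
      rw [← Real.exp_add]
      apply Real.exp_le_exp.mpr
      have htn : (n:ℝ) ≤ t := by nlinarith
      nlinarith [mul_le_mul_of_nonneg_left hm2 ht0.le,
        mul_nonneg ht0.le (mul_nonneg hm0 hm0),
        mul_le_mul_of_nonneg_right htn hm0]
    have he1 : Real.exp (-(t*Real.log 2)) ≤ t ^ (-((n:ℝ)/2)) := key_time hn ht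
    have he2 : Real.exp (-((n:ℝ)*mlog ξ)) = ((1:ℝ)+‖ξ‖^2) ^ (-(n:ℝ)) := by
      rw [Real.rpow_def_of_pos (one_add_sq_pos ξ)]
      congr 1
      simp [mlog]
      ring
    rw [he2] at hstep
    have hmul : Real.exp (-(t*Real.log 2)) * ((1:ℝ)+‖ξ‖^2)^(-(n:ℝ)) ≤
        t ^ (-((n:ℝ)/2)) * ((1:ℝ)+‖ξ‖^2)^(-(n:ℝ)) :=
      mul_le_mul_of_nonneg_right he1 (by positivity)
    have hpos : 0 ≤ Real.exp (-t*‖ξ‖^2) := (Real.exp_pos _).le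
    linarith

end Aux

open Aux

theorem profile1_L2_two_sided (n : ℕ) (hn : 1 ≤ n)
    (u₀ u₁ : EuclideanSpace ℝ (Fin n) → ℂ)
    (h0L1 : Integrable u₀) (h1L1 : Integrable u₁) :
    ∃ C₁ C₂ T : ℝ, 0 < C₁ ∧ 0 < C₂ ∧ 1 ≤ T ∧ ∀ t ≥ T,
      C₁ * ‖PP u₀ u₁‖ ^ 2 * t ^ (-((n:ℝ) / 2)) ≤
        (∫ ξ, ‖prof1 u₀ u₁ t ξ‖ ^ 2) ∧
      (∫ ξ, ‖prof1 u₀ u₁ t ξ‖ ^ 2) ≤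
        C₂ * (normL1 u₀ ^ 2 + normL1 u₁ ^ 2) * t ^ (-((n:ℝ) / 2)) := by
  haveI : Nonempty (Fin n) := ⟨⟨0, hn⟩⟩
  have hn1 : (1:ℝ) ≤ n := by exact_mod_cast hn
  set A : ℝ := ‖PP u₀ u₁‖ ^ 2 with hA
  have hA0 : 0 ≤ A := by positivity
  set I : ℝ := ∫ ξ : EuclideanSpace ℝ (Fin n), ((1:ℝ)+‖ξ‖^2) ^ (-(n:ℝ)) with hI
  have hI0 : 0 ≤ I := integral_nonneg fun ξ => by positivity
  set B : ℝ := (volume (ball (0 : EuclideanSpace ℝ (Fin n)) 1)).toReal with hB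
  have hB0 : 0 < B := by
    apply ENNReal.toReal_pos
    · exact (measure_ball_pos volume _ one_pos).ne'
    · exact (measure_ball_lt_top).ne
  refine ⟨Real.exp (-4) * B, 2 * (Real.pi ^ ((n:ℝ)/2) + I), 4*(n:ℝ)^2,
    by positivity, by positivity, by nlinarith, ?_⟩
  intro t ht
  have ht1 : (1:ℝ) ≤ t := by nlinarith
  have ht0 : (0:ℝ) < t := by linarith
  set E : EuclideanSpace ℝ (Fin n) → ℝ :=
    fun ξ => Real.exp (-(2*t) * (mlog ξ * (1 + mlog ξ))) with hE
  -- pointwise rewriting of the integrand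
  have hEq : ∀ ξ, ‖prof1 u₀ u₁ t ξ‖ ^ 2 = A * E ξ := by
    intro ξ
    rw [prof1, norm_mul, Complex.norm_real, Real.norm_eq_abs, abs_of_nonneg (Real.exp_pos _).le, mul_pow,
      hE, hA]
    have : Real.exp (-(t * (mlog ξ * (1 + mlog ξ)))) ^ 2
        = Real.exp (-(2*t) * (mlog ξ * (1 + mlog ξ))) := by
      rw [sq, ← Real.exp_add]
      ring_nf
    rw [this]
  -- integrability
  have hgauss : Integrable (fun ξ : EuclideanSpace ℝ (Fin n) => Real.exp (-t * ‖ξ‖^2)) :=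
    integrable_gauss ht0
  have hjb : Integrable (fun ξ : EuclideanSpace ℝ (Fin n) =>
      t ^ (-((n:ℝ)/2)) * ((1:ℝ)+‖ξ‖^2) ^ (-(n:ℝ))) :=
    (integrable_jb hn).const_mul _
  have hdom : Integrable (fun ξ : EuclideanSpace ℝ (Fin n) =>
      Real.exp (-t * ‖ξ‖^2) + t ^ (-((n:ℝ)/2)) * ((1:ℝ)+‖ξ‖^2) ^ (-(n:ℝ))) :=
    hgauss.add hjb
  have hEcont : Continuous E := by
    apply Real.continuous_exp.comp
    exact continuous_const.mul (continuous_mlog.mul (continuous_const.add continuous_mlog))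
  have hEint : Integrable E := by
    apply hdom.mono' hEcont.aestronglyMeasurable
    filter_upwards with ξ
    rw [Real.norm_eq_abs, abs_of_nonneg (Real.exp_pos _).le]
    exact key_ub hn ht ξ
  have hInt : (∫ ξ, ‖prof1 u₀ u₁ t ξ‖ ^ 2) = A * ∫ ξ, E ξ := by
    rw [← integral_const_mul]
    exact integral_congr_ae (Filter.Eventually.of_forall fun ξ => hEq ξ)
  constructor
  · -- lower bound
    set r : ℝ := (Real.sqrt t)⁻¹ with hr
    have hs0 : 0 < Real.sqrt t := Real.sqrt_pos.mpr ht0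
    have hr0 : 0 < r := by positivity
    have hball : ∀ ξ ∈ ball (0 : EuclideanSpace ℝ (Fin n)) r, Real.exp (-4:ℝ) ≤ E ξ := by
      intro ξ hξ
      rw [mem_ball_zero_iff] at hξ
      have hsq : ‖ξ‖^2 ≤ t⁻¹ := by
        have h1 : ‖ξ‖^2 ≤ r^2 := by nlinarith [norm_nonneg ξ]
        have h2 : r^2 = t⁻¹ := by
          rw [hr, ← Real.sq_sqrt ht0.le]
          field_simp
          rw [Real.sqrt_sq hs0.le]
        linarith
      have hm := mlog_nonneg ξ
      have hmle : mlog ξ ≤ t⁻¹ := le_trans (mlog_le_sq ξ) hsq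
      have hmt : mlog ξ * t ≤ 1 := by
        calc mlog ξ * t ≤ t⁻¹ * t := by nlinarith
        _ = 1 := by field_simp
      have hm1 : mlog ξ ≤ 1 := by
        calc mlog ξ ≤ t⁻¹ := hmle
        _ ≤ 1 := by rw [inv_le_one_iff₀]; right; exact ht1
      apply Real.exp_le_exp.mpr
      nlinarith
    have hmeas : volume (ball (0 : EuclideanSpace ℝ (Fin n)) r)
        = ENNReal.ofReal (r ^ n) * volume (ball (0 : EuclideanSpace ℝ (Fin n)) 1) := by
      have := Measure.addHaar_ball (volume : Measure (EuclideanSpace ℝ (Fin n))) 0 hr0.le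
      rwa [finrank_euclideanSpace_fin] at this
    have hrn : r ^ n = t ^ (-((n:ℝ)/2)) := by
      have h1 : r = t ^ (-(1/2:ℝ)) := by
        rw [hr, Real.sqrt_eq_rpow, ← Real.rpow_neg ht0.le]
      calc r ^ n = (t ^ (-(1/2:ℝ))) ^ (n:ℕ) := by rw [h1]
      _ = t ^ ((-(1/2:ℝ)) * n) := by
          rw [← Real.rpow_natCast (t ^ (-(1/2:ℝ))) n, ← Real.rpow_mul ht0.le]
      _ = t ^ (-((n:ℝ)/2)) := by congr 1; ring
    have htr : (volume (ball (0 : EuclideanSpace ℝ (Fin n)) r)).toReal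
        = t ^ (-((n:ℝ)/2)) * B := by
      rw [hmeas, ENNReal.toReal_mul, ENNReal.toReal_ofReal (by positivity), hrn, hB]
    have hlo1 : Real.exp (-4:ℝ) * (volume (ball (0 : EuclideanSpace ℝ (Fin n)) r)).toReal
        ≤ ∫ ξ in ball (0 : EuclideanSpace ℝ (Fin n)) r, E ξ :=
      by have h := setIntegral_ge_of_const_le measurableSet_ball (measure_ball_lt_top).ne hball
           hEint.integrableOn
         rw [smul_eq_mul, mul_comm] at h
         exact h
    have hlo2 : (∫ ξ in ball (0 : EuclideanSpace ℝ (Fin n)) r, E ξ) ≤ ∫ ξ, E ξ :=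
      setIntegral_le_integral hEint
        (Filter.Eventually.of_forall fun ξ => (Real.exp_pos _).le)
    rw [htr] at hlo1
    have hkey : Real.exp (-4:ℝ) * (t ^ (-((n:ℝ)/2)) * B) ≤ ∫ ξ, E ξ := le_trans hlo1 hlo2
    rw [hInt]
    calc Real.exp (-4) * B * A * t ^ (-((n:ℝ)/2))
        = A * (Real.exp (-4:ℝ) * (t ^ (-((n:ℝ)/2)) * B)) := by ring
    _ ≤ A * ∫ ξ, E ξ := mul_le_mul_of_nonneg_left hkey hA0
  · -- upper bound
    have hmono : (∫ ξ, E ξ) ≤ ∫ ξ : EuclideanSpace ℝ (Fin n),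
        (Real.exp (-t * ‖ξ‖^2) + t ^ (-((n:ℝ)/2)) * ((1:ℝ)+‖ξ‖^2) ^ (-(n:ℝ))) :=
      integral_mono hEint hdom (fun ξ => key_ub hn ht ξ)
    have hg : (∫ ξ : EuclideanSpace ℝ (Fin n), Real.exp (-t * ‖ξ‖^2))
        = Real.pi ^ ((n:ℝ)/2) * t ^ (-((n:ℝ)/2)) := by
      rw [GaussianFourier.integral_rexp_neg_mul_sq_norm ht0, finrank_euclideanSpace_fin,
        Real.div_rpow Real.pi_pos.le ht0.le, div_eq_mul_inv, ← Real.rpow_neg ht0.le]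
    rw [integral_add hgauss hjb, integral_const_mul, hg, ← hI] at hmono
    have hup : (∫ ξ, E ξ) ≤ (Real.pi ^ ((n:ℝ)/2) + I) * t ^ (-((n:ℝ)/2)) := by
      nlinarith [Real.rpow_nonneg ht0.le (-((n:ℝ)/2))]
    -- |PP| ≤ normL1 u₀ + normL1 u₁
    have hn0 : 0 ≤ normL1 u₀ := integral_nonneg fun x => norm_nonneg _
    have hn1' : 0 ≤ normL1 u₁ := integral_nonneg fun x => norm_nonneg _
    have h0 : ‖∫ x, u₀ x‖ ≤ normL1 u₀ := by
      rw [normL1]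
      exact norm_integral_le_integral_norm u₀
    have h1 : ‖∫ x, u₁ x‖ ≤ normL1 u₁ := by
      rw [normL1]
      exact norm_integral_le_integral_norm u₁
    have hPP : ‖PP u₀ u₁‖ ≤ normL1 u₀ + normL1 u₁ := by
      rw [PP]
      exact (norm_add_le _ _).trans (add_le_add h0 h1)
    have hA2 : A ≤ 2 * (normL1 u₀ ^ 2 + normL1 u₁ ^ 2) := by
      rw [hA]
      nlinarith [norm_nonneg (PP u₀ u₁), sq_nonneg (normL1 u₀ - normL1 u₁)]
    rw [hInt]
    calc A * ∫ ξ, E ξ ≤ A * ((Real.pi ^ ((n:ℝ)/2) + I) * t ^ (-((n:ℝ)/2))) := by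
          apply mul_le_mul_of_nonneg_left hup hA0
    _ ≤ (2 * (normL1 u₀ ^ 2 + normL1 u₁ ^ 2)) *
          ((Real.pi ^ ((n:ℝ)/2) + I) * t ^ (-((n:ℝ)/2))) := by
          apply mul_le_mul_of_nonneg_right hA2
          positivity
    _ = 2 * (Real.pi ^ ((n:ℝ)/2) + I) * (normL1 u₀ ^ 2 + normL1 u₁ ^ 2)
          * t ^ (-((n:ℝ)/2)) := by ring
end
end

section
/- Let n ≥ 1, l ≥ 0, and let u₀ ∈ Y^{l+1} ∩ L¹(ℝⁿ) and u₁ ∈ Y^{l} ∩ L¹(ℝⁿ). Then there exists a constant C > 0, independent of u₀, u₁ and t, such that for all t > 0: ∫_{ℝⁿ} |φ₂(t,ξ)|² dξ ≤ C·(‖u₀‖²_{Y^{l+1}} + ‖u₁‖²_{Y^{l}})·t^{-(l+1)}. -/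
open MeasureTheory Real

noncomputable section

lemma exp_neg_le_aux (p : ℝ) (hp : 0 ≤ p) {s : ℝ} (hs : 0 < s) :
    Real.exp (-s) ≤ ((⌈p⌉₊ + 1 : ℕ) : ℝ) ^ (⌈p⌉₊ + 1) / s ^ p := by
  set k : ℕ := ⌈p⌉₊ + 1 with hk
  have hk0 : (0:ℝ) < (k:ℝ) := by positivity
  have hpk : p ≤ (k:ℝ) := (Nat.le_ceil p).trans (by exact_mod_cast Nat.le_succ _)
  rw [le_div_iff₀ (Real.rpow_pos_of_pos hs p), Real.exp_neg, inv_mul_le_iff₀ (Real.exp_pos s)]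
  have hK1 : (1:ℝ) ≤ ((k:ℝ)) ^ k := one_le_pow₀ (by exact_mod_cast Nat.one_le_iff_ne_zero.mpr (by omega))
  rcases le_or_gt s 1 with h1 | h1
  · have h2 : s ^ p ≤ 1 := Real.rpow_le_one hs.le h1 hp
    have h3 : (1:ℝ) ≤ Real.exp s := Real.one_le_exp hs.le
    nlinarith [Real.exp_pos s]
  · have h2 : s ^ p ≤ s ^ ((k:ℝ)) := Real.rpow_le_rpow_of_exponent_le h1.le hpk
    rw [Real.rpow_natCast] at h2
    have h3 : s / k ≤ Real.exp (s / k) := le_trans (by linarith [div_pos (lt_trans one_pos h1) hk0]) (Real.add_one_le_exp (s / k))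
    have h4 : (s / k) ^ k ≤ Real.exp (s / k) ^ k := pow_le_pow_left₀ (by positivity) h3 k
    rw [← Real.exp_nat_mul, mul_div_cancel₀ s hk0.ne', div_pow] at h4
    calc s ^ p ≤ s ^ k := h2
      _ ≤ Real.exp s * (k:ℝ) ^ k := by
          rw [div_le_iff₀ (by positivity)] at h4
          linarith [h4]

lemma pointwise_bound {n : ℕ} (u₀ u₁ : EuclideanSpace ℝ (Fin n) → ℂ) (l : ℝ) (hl : 0 ≤ l)
    {t : ℝ} (ht : 0 < t) {ξ : EuclideanSpace ℝ (Fin n)} (hξ : ξ ≠ 0) :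
    ‖prof2 u₀ u₁ t ξ‖ ^ 2 ≤
      2 * (((⌈l + 1⌉₊ + 1 : ℕ) : ℝ) ^ (⌈l + 1⌉₊ + 1)) * t ^ (-(l + 1)) *
        ((1 + mlog ξ) ^ (l + 1) * ‖ft u₀ ξ‖ ^ 2
          + (1 + mlog ξ) ^ l * ‖ft u₁ ξ‖ ^ 2) := by
  have hm : 0 < mlog ξ := by
    have hξ' : 0 < ‖ξ‖ := norm_pos_iff.mpr hξ
    exact Real.log_pos (by nlinarith)
  set m := mlog ξ with hmdef
  set K : ℝ := ((⌈l + 1⌉₊ + 1 : ℕ) : ℝ) ^ (⌈l + 1⌉₊ + 1) with hKdef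
  have hK0 : 0 < K := by positivity
  set A := ‖ft u₁ ξ‖ with hAdef
  set B := ‖ft u₀ ξ‖ with hBdef
  have hA : 0 ≤ A := norm_nonneg _
  have hB : 0 ≤ B := norm_nonneg _
  set S := Real.sin (Real.sqrt m * t) / Real.sqrt m with hSdef
  set Co := Real.cos (Real.sqrt m * t) with hCodef
  set E := Real.exp (-(t / (2 * m))) with hEdef
  have habs : ‖prof2 u₀ u₁ t ξ‖ ≤ E * (|S| * A + |Co| * B) := by
    rw [prof2, norm_mul, Complex.norm_real, Real.norm_eq_abs, Real.abs_exp]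
    refine mul_le_mul_of_nonneg_left ?_ (Real.exp_pos _).le
    calc ‖((S : ℝ) : ℂ) * ft u₁ ξ + ((Co : ℝ) : ℂ) * ft u₀ ξ‖
        ≤ ‖((S : ℝ) : ℂ) * ft u₁ ξ‖ + ‖((Co : ℝ) : ℂ) * ft u₀ ξ‖ :=
          norm_add_le _ _
      _ = |S| * A + |Co| * B := by rw [norm_mul, norm_mul, Complex.norm_real, Complex.norm_real, Real.norm_eq_abs, Real.norm_eq_abs]
  have hsq : ‖prof2 u₀ u₁ t ξ‖ ^ 2 ≤ (E * (|S| * A + |Co| * B)) ^ 2 :=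
    pow_le_pow_left₀ (norm_nonneg _) habs 2
  have hE2 : E ^ 2 = Real.exp (-(t / m)) := by
    rw [sq, ← Real.exp_add]
    congr 1
    field_simp
    ring
  have hS2 : S ^ 2 ≤ 1 / m := by
    rw [hSdef, div_pow, Real.sq_sqrt hm.le]
    gcongr
    exact Real.sin_sq_le_one _
  have hCo2 : Co ^ 2 ≤ 1 := Real.cos_sq_le_one _
  have step1 : ‖prof2 u₀ u₁ t ξ‖ ^ 2 ≤
      2 * ((Real.exp (-(t / m)) * (1 / m)) * A ^ 2 + Real.exp (-(t / m)) * B ^ 2) := by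
    have expand : (E * (|S| * A + |Co| * B)) ^ 2
        = E ^ 2 * ((|S| * A + |Co| * B) ^ 2) := by ring
    have h2 : (|S| * A + |Co| * B) ^ 2 ≤ 2 * ((1 / m) * A ^ 2 + 1 * B ^ 2) := by
      nlinarith [sq_abs S, sq_abs Co, sq_nonneg (|S| * A - |Co| * B), sq_nonneg A, sq_nonneg B,
        mul_nonneg (abs_nonneg S) hA, mul_nonneg (abs_nonneg Co) hB]
    calc ‖prof2 u₀ u₁ t ξ‖ ^ 2 ≤ (E * (|S| * A + |Co| * B)) ^ 2 := hsq
      _ = E ^ 2 * ((|S| * A + |Co| * B) ^ 2) := expand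
      _ ≤ E ^ 2 * (2 * ((1 / m) * A ^ 2 + 1 * B ^ 2)) := by
          exact mul_le_mul_of_nonneg_left h2 (sq_nonneg E)
      _ = 2 * ((Real.exp (-(t / m)) * (1 / m)) * A ^ 2 + Real.exp (-(t / m)) * B ^ 2) := by
          rw [hE2]; ring
  have hs : 0 < t / m := div_pos ht hm
  have hkey : Real.exp (-(t / m)) ≤ K * m ^ (l + 1) * t ^ (-(l + 1)) := by
    have h := exp_neg_le_aux (l + 1) (by linarith) hs
    rw [Real.div_rpow ht.le hm.le, div_div_eq_mul_div] at h
    rw [Real.rpow_neg ht.le, ← div_eq_mul_inv]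
    exact h
  have hT : 0 < t ^ (-(l + 1)) := Real.rpow_pos_of_pos ht _
  have hml1 : m ^ (l + 1) ≤ (1 + m) ^ (l + 1) :=
    Real.rpow_le_rpow hm.le (by linarith) (by linarith)
  have hml : m ^ l ≤ (1 + m) ^ l := Real.rpow_le_rpow hm.le (by linarith) hl
  have h0term : Real.exp (-(t / m)) ≤ K * (1 + m) ^ (l + 1) * t ^ (-(l + 1)) := by
    calc Real.exp (-(t / m)) ≤ K * m ^ (l + 1) * t ^ (-(l + 1)) := hkey
      _ ≤ K * (1 + m) ^ (l + 1) * t ^ (-(l + 1)) := by gcongr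
  have h1term : Real.exp (-(t / m)) * (1 / m) ≤ K * (1 + m) ^ l * t ^ (-(l + 1)) := by
    have e1 : K * m ^ (l + 1) * t ^ (-(l + 1)) / m = K * m ^ l * t ^ (-(l + 1)) := by
      rw [show m ^ (l + 1) = m ^ l * m by rw [Real.rpow_add hm, Real.rpow_one]]
      field_simp
    rw [mul_one_div]
    calc Real.exp (-(t / m)) / m ≤ K * m ^ (l + 1) * t ^ (-(l + 1)) / m := by gcongr
      _ = K * m ^ l * t ^ (-(l + 1)) := e1
      _ ≤ K * (1 + m) ^ l * t ^ (-(l + 1)) := by gcongr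
  calc ‖prof2 u₀ u₁ t ξ‖ ^ 2
      ≤ 2 * ((Real.exp (-(t / m)) * (1 / m)) * A ^ 2 + Real.exp (-(t / m)) * B ^ 2) := step1
    _ ≤ 2 * ((K * (1 + m) ^ l * t ^ (-(l + 1))) * A ^ 2
          + (K * (1 + m) ^ (l + 1) * t ^ (-(l + 1))) * B ^ 2) := by
        have := mul_le_mul_of_nonneg_right h1term (sq_nonneg A)
        have := mul_le_mul_of_nonneg_right h0term (sq_nonneg B)
        linarith
    _ = 2 * K * t ^ (-(l + 1)) * ((1 + m) ^ (l + 1) * B ^ 2 + (1 + m) ^ l * A ^ 2) := by ring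

theorem profile2_L2_upper (n : ℕ) (hn : 1 ≤ n) (l : ℝ) (hl : 0 ≤ l)
    (u₀ u₁ : EuclideanSpace ℝ (Fin n) → ℂ)
    (h0L1 : Integrable u₀) (h1L1 : Integrable u₁)
    (h0Y : MemY u₀ (l + 1)) (h1Y : MemY u₁ l) :
    ∃ C : ℝ, 0 < C ∧ ∀ t > (0:ℝ),
      (∫ ξ, ‖prof2 u₀ u₁ t ξ‖ ^ 2) ≤
        C * (Ysq u₀ (l + 1) + Ysq u₁ l) * t ^ (-(l + 1)) := by
  classical
  set K : ℝ := ((⌈l + 1⌉₊ + 1 : ℕ) : ℝ) ^ (⌈l + 1⌉₊ + 1) with hKdef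
  have hK0 : 0 < K := by positivity
  refine ⟨2 * K, by positivity, ?_⟩
  intro t ht
  haveI : Nonempty (Fin n) := ⟨⟨0, hn⟩⟩
  haveI : Nontrivial (EuclideanSpace ℝ (Fin n)) := inferInstance
  haveI : NullSingletonClass (volume : Measure (EuclideanSpace ℝ (Fin n))) := inferInstance
  have hne : ∀ᵐ ξ : EuclideanSpace ℝ (Fin n) ∂volume, ξ ≠ 0 := by
    refine ae_iff.mpr ?_
    simpa using measure_singleton (0 : EuclideanSpace ℝ (Fin n))
  set g : EuclideanSpace ℝ (Fin n) → ℝ := fun ξ =>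
    2 * K * t ^ (-(l + 1)) * ((1 + mlog ξ) ^ (l + 1) * ‖ft u₀ ξ‖ ^ 2
      + (1 + mlog ξ) ^ l * ‖ft u₁ ξ‖ ^ 2) with hgdef
  have hgint : Integrable g := by
    have := (h0Y.add h1Y).const_mul (2 * K * t ^ (-(l + 1)))
    simpa [hgdef, Pi.add_apply] using this
  have hmono : (∫ ξ, ‖prof2 u₀ u₁ t ξ‖ ^ 2) ≤ ∫ ξ, g ξ := by
    refine integral_mono_of_nonneg (Filter.Eventually.of_forall fun ξ => by positivity) hgint ?_
    filter_upwards [hne] with ξ hξ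
    exact pointwise_bound u₀ u₁ l hl ht hξ
  have hgeq : (∫ ξ, g ξ) = 2 * K * (Ysq u₀ (l + 1) + Ysq u₁ l) * t ^ (-(l + 1)) := by
    rw [hgdef]
    simp only
    rw [MeasureTheory.integral_const_mul, integral_add h0Y h1Y]
    have e0 : (∫ ξ, (1 + mlog ξ) ^ (l + 1) * ‖ft u₀ ξ‖ ^ 2) = Ysq u₀ (l + 1) := rfl
    have e1 : (∫ ξ, (1 + mlog ξ) ^ l * ‖ft u₁ ξ‖ ^ 2) = Ysq u₁ l := rfl
    rw [e0, e1]
    ring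
  calc (∫ ξ, ‖prof2 u₀ u₁ t ξ‖ ^ 2) ≤ ∫ ξ, g ξ := hmono
    _ = 2 * K * (Ysq u₀ (l + 1) + Ysq u₁ l) * t ^ (-(l + 1)) := hgeq
end
end
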